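/- arXiv:2605.12142 — 8 statements merged into one kernel-verified Lean document; each statement's English description precedes it below -/
import Mathlib

section
/- Let (Ω, 𝓕, P) be a probability space with a filtration (𝓕_t)_{t≥0}, let K ∈ ℕ, and for each i = 1,…,K let Tᵢ be a stopping time of the filtration, let ξᵢ be a bounded real random variable, let Nᵢ be a bounded random variable measurable with respect to the σ-algebra 𝓕_{Tᵢ} at the stopping time Tᵢ, and let ζᵢ be an 𝓕_{Tᵢ}-measurable version of E[ξᵢ | 𝓕_{Tᵢ}]. Then for all 0 ≤ s ≤ t, E[Σᵢ₌₁ᴷ 1_{{s < Tᵢ ≤ t}} · Nᵢ · ξᵢ | 𝓕_s] = E[Σᵢ₌₁ᴷ 1_{{s < Tᵢ ≤ t}} · Nᵢ · ζᵢ | 𝓕_s] almost surely; consequently the process M_t := E[Σᵢ₌₁ᴷ 1_{{Tᵢ ≤ t}} Nᵢ ξᵢ | 𝓕_t] − Σᵢ₌₁ᴷ 1_{{Tᵢ ≤ t}} Nᵢ ζᵢ has centered increments given the past. -/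
open MeasureTheory ProbabilityTheory

private lemma bdd_integrable {Ω : Type*} [MeasurableSpace Ω] {P : Measure Ω} [IsFiniteMeasure P]
    {f : Ω → ℝ} (hf : AEStronglyMeasurable f P) {C : ℝ} (h : ∀ ω, |f ω| ≤ C) : Integrable f P :=
  ⟨hf, HasFiniteIntegral.of_bounded (ae_of_all _ fun ω => by
    simpa [Real.norm_eq_abs] using h ω)⟩

private lemma inter_gt_mem {Ω : Type*} [mΩ : MeasurableSpace Ω] {ℱ : Filtration ℝ mΩ} {T : Ω → ℝ}
    (hT : IsStoppingTime ℱ (fun ω => ((T ω : ℝ) : WithTop ℝ))) {s : ℝ} {B : Set Ω}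
    (hB : MeasurableSet[ℱ s] B) :
    MeasurableSet[hT.measurableSpace] (B ∩ {ω | s < T ω}) := by
  rw [hT.measurableSet]
  have hTs : ∀ u, MeasurableSet[ℱ u] {ω | T ω ≤ u} := fun u => by simpa using hT u
  refine ⟨?_, fun u => ?_⟩
  · have h0 : B ∩ {ω | s < T ω} = B ∩ {ω | T ω ≤ s}ᶜ := by
      ext ω; simp [not_le]
    rw [h0]
    exact (le_iSup (fun t => (ℱ t : MeasurableSpace Ω)) s) _ (hB.inter (hTs s).compl)
  simp only [WithTop.coe_le_coe]
  by_cases hsu : s ≤ u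
  · have h1 : B ∩ {ω | s < T ω} ∩ {ω | T ω ≤ u} =
        (B ∩ {ω | T ω ≤ s}ᶜ) ∩ {ω | T ω ≤ u} := by
      ext ω; simp [not_le]
    rw [h1]
    exact ((ℱ.mono hsu _ hB).inter ((ℱ.mono hsu _ (hTs s)).compl)).inter (hTs u)
  · have h1 : B ∩ {ω | s < T ω} ∩ {ω | T ω ≤ u} = ∅ := by
      ext ω
      simp only [Set.mem_inter_iff, Set.mem_setOf_eq, Set.mem_empty_iff_false, iff_false, not_and]
      rintro ⟨-, h1⟩ h2
      exact hsu (le_of_lt (lt_of_lt_of_le h1 h2))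
    rw [h1]
    exact @MeasurableSet.empty _ (ℱ u)

private lemma pullout {Ω : Type*} [mΩ : MeasurableSpace Ω] {P : Measure Ω}
    [IsProbabilityMeasure P] {m : MeasurableSpace Ω} (hm : m ≤ mΩ) {h ξ ζ : Ω → ℝ}
    (hhm : StronglyMeasurable[m] h)
    (hhξ : Integrable (fun ω => h ω * ξ ω) P) (hξ_int : Integrable ξ P)
    (hζ : ζ =ᵐ[P] P[ξ | m]) :
    ∫ ω, h ω * ξ ω ∂P = ∫ ω, h ω * ζ ω ∂P := by
  have h2 : P[h * ξ | m] =ᵐ[P] h * P[ξ | m] :=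
    condExp_mul_of_stronglyMeasurable_left hhm hhξ hξ_int
  have h3 : ∫ ω, h ω * ξ ω ∂P = ∫ ω, (P[h * ξ | m]) ω ∂P := (integral_condExp hm).symm
  rw [h3, integral_congr_ae h2]
  refine integral_congr_ae ?_
  filter_upwards [hζ] with ω hω
  simp only [Pi.mul_apply, hω]

/-- Stopping-time form of the predictable-jump compensating lemma: with stopping times `Tᵢ`,
bounded `ξᵢ`, bounded `𝓕_{Tᵢ}`-measurable `Nᵢ` and `ζᵢ` an `𝓕_{Tᵢ}`-measurable version of
`E[ξᵢ | 𝓕_{Tᵢ}]`, conditioning `Σᵢ 1_{s<Tᵢ≤t} Nᵢ ξᵢ` and `Σᵢ 1_{s<Tᵢ≤t} Nᵢ ζᵢ` on `𝓕_s`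
give the same result a.s.; consequently the compensated process
`M_t = E[Σᵢ 1_{Tᵢ≤t} Nᵢ ξᵢ | 𝓕_t] − Σᵢ 1_{Tᵢ≤t} Nᵢ ζᵢ` has centered increments given the past. -/
theorem stmt3 {Ω : Type*} [mΩ : MeasurableSpace Ω] (P : Measure Ω) [IsProbabilityMeasure P]
    (ℱ : Filtration ℝ mΩ) (K : ℕ)
    (T : Fin K → Ω → ℝ) (hT : ∀ i, IsStoppingTime ℱ (fun ω => ((T i ω : ℝ) : WithTop ℝ)))
    (ξ N ζ : Fin K → Ω → ℝ)
    (hξmeas : ∀ i, Measurable (ξ i)) (hξbd : ∀ i, ∃ C : ℝ, ∀ ω, |ξ i ω| ≤ C)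
    (hNmeas : ∀ i, Measurable[(hT i).measurableSpace] (N i))
    (hNbd : ∀ i, ∃ C : ℝ, ∀ ω, |N i ω| ≤ C)
    (hζmeas : ∀ i, Measurable[(hT i).measurableSpace] (ζ i))
    (hζ : ∀ i, ζ i =ᵐ[P] P[ξ i | (hT i).measurableSpace])
    (s t : ℝ) (hs : 0 ≤ s) (hst : s ≤ t) :
    (P[(fun ω => ∑ i, (T i ⁻¹' Set.Ioc s t).indicator (fun _ => (1 : ℝ)) ω
          * N i ω * ξ i ω) | ℱ s]
      =ᵐ[P] P[(fun ω => ∑ i, (T i ⁻¹' Set.Ioc s t).indicator (fun _ => (1 : ℝ)) ω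
          * N i ω * ζ i ω) | ℱ s])
    ∧
    (P[(fun ω =>
        ((P[(fun ω' => ∑ i, (T i ⁻¹' Set.Iic t).indicator (fun _ => (1 : ℝ)) ω'
              * N i ω' * ξ i ω') | ℱ t]) ω
          - ∑ i, (T i ⁻¹' Set.Iic t).indicator (fun _ => (1 : ℝ)) ω * N i ω * ζ i ω)
        - ((P[(fun ω' => ∑ i, (T i ⁻¹' Set.Iic s).indicator (fun _ => (1 : ℝ)) ω'
              * N i ω' * ξ i ω') | ℱ s]) ω
          - ∑ i, (T i ⁻¹' Set.Iic s).indicator (fun _ => (1 : ℝ)) ω * N i ω * ζ i ω)) | ℱ s]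
      =ᵐ[P] 0) := by
  have hmle : ℱ s ≤ mΩ := ℱ.le s
  have hTm : ∀ i, Measurable (T i) := fun i =>
    measurable_of_Iic fun x => by simpa [Set.preimage] using ℱ.le x _ (hT i x)
  have hNamb : ∀ i, Measurable (N i) := fun i =>
    (hNmeas i).mono (hT i).measurableSpace_le le_rfl
  have hζint : ∀ i, Integrable (ζ i) P := fun i => integrable_condExp.congr (hζ i).symm
  have hξint : ∀ i, Integrable (ξ i) P := fun i => by
    obtain ⟨C, hC⟩ := hξbd i
    exact bdd_integrable (hξmeas i).aestronglyMeasurable hC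
  have hindm : ∀ (i) (A : Set ℝ), MeasurableSet A →
      Measurable ((T i ⁻¹' A).indicator (fun _ => (1 : ℝ))) :=
    fun i A hA => measurable_const.indicator (hTm i hA)
  have hindN : ∀ (i) (A : Set ℝ) (ω),
      |(T i ⁻¹' A).indicator (fun _ => (1 : ℝ)) ω * N i ω| ≤ |N i ω| := by
    intro i A ω
    by_cases h : ω ∈ T i ⁻¹' A <;>
      simp [Set.indicator_of_mem, Set.indicator_of_notMem, h, abs_nonneg]
  have htermξ : ∀ (i) (A : Set ℝ), MeasurableSet A →
      Integrable (fun ω => (T i ⁻¹' A).indicator (fun _ => (1 : ℝ)) ω * N i ω * ξ i ω) P := by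
    intro i A hA
    obtain ⟨CN, hCN⟩ := hNbd i
    obtain ⟨Cξ, hCξ⟩ := hξbd i
    refine bdd_integrable ((((hindm i A hA).mul (hNamb i)).mul
      (hξmeas i)).aestronglyMeasurable) (C := CN * Cξ) fun ω => ?_
    calc |(T i ⁻¹' A).indicator (fun _ => (1 : ℝ)) ω * N i ω * ξ i ω|
        = |(T i ⁻¹' A).indicator (fun _ => (1 : ℝ)) ω * N i ω| * |ξ i ω| := abs_mul _ _
      _ ≤ |N i ω| * |ξ i ω| := mul_le_mul_of_nonneg_right (hindN i A ω) (abs_nonneg _)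
      _ ≤ CN * Cξ := mul_le_mul (hCN ω) (hCξ ω) (abs_nonneg _) ((abs_nonneg _).trans (hCN ω))
  have htermζ : ∀ (i) (A : Set ℝ), MeasurableSet A →
      Integrable (fun ω => (T i ⁻¹' A).indicator (fun _ => (1 : ℝ)) ω * N i ω * ζ i ω) P := by
    intro i A hA
    obtain ⟨CN, hCN⟩ := hNbd i
    exact (hζint i).bdd_mul (((hindm i A hA).mul (hNamb i)).aestronglyMeasurable)
      (ae_of_all _ fun ω => by rw [Real.norm_eq_abs]; exact (hindN i A ω).trans (hCN ω))
  have hsumξ : ∀ (A : Set ℝ), MeasurableSet A →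
      Integrable (fun ω => ∑ i, (T i ⁻¹' A).indicator (fun _ => (1 : ℝ)) ω * N i ω * ξ i ω) P :=
    fun A hA => integrable_finset_sum _ fun i _ => htermξ i A hA
  have hsumζ : ∀ (A : Set ℝ), MeasurableSet A →
      Integrable (fun ω => ∑ i, (T i ⁻¹' A).indicator (fun _ => (1 : ℝ)) ω * N i ω * ζ i ω) P :=
    fun A hA => integrable_finset_sum _ fun i _ => htermζ i A hA
  have part1 : P[(fun ω => ∑ i, (T i ⁻¹' Set.Ioc s t).indicator (fun _ => (1 : ℝ)) ω
          * N i ω * ξ i ω) | ℱ s]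
      =ᵐ[P] P[(fun ω => ∑ i, (T i ⁻¹' Set.Ioc s t).indicator (fun _ => (1 : ℝ)) ω
          * N i ω * ζ i ω) | ℱ s] := by
    refine (ae_eq_condExp_of_forall_setIntegral_eq hmle (hsumξ _ measurableSet_Ioc)
      (fun B hB _ => integrable_condExp.integrableOn)
      (fun B hB _ => ?_)
      stronglyMeasurable_condExp.aestronglyMeasurable).symm
    rw [setIntegral_condExp hmle (hsumζ _ measurableSet_Ioc) hB]
    have hBamb : MeasurableSet B := hmle _ hB
    rw [integral_finset_sum _ (fun i _ => (htermζ i _ measurableSet_Ioc).integrableOn),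
      integral_finset_sum _ (fun i _ => (htermξ i _ measurableSet_Ioc).integrableOn)]
    refine Finset.sum_congr rfl fun i _ => ?_
    obtain ⟨CN, hCN⟩ := hNbd i
    set h : Ω → ℝ :=
      fun ω => (B ∩ T i ⁻¹' Set.Ioc s t).indicator (fun _ => (1 : ℝ)) ω * N i ω with hh
    have hset : MeasurableSet[(hT i).measurableSpace] (B ∩ T i ⁻¹' Set.Ioc s t) := by
      have heq : B ∩ T i ⁻¹' Set.Ioc s t = (B ∩ {ω | s < T i ω}) ∩ {ω | T i ω ≤ t} := by
        ext ω
        simp only [Set.mem_inter_iff, Set.mem_preimage, Set.mem_Ioc, Set.mem_setOf_eq]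
        tauto
      rw [heq]
      exact (inter_gt_mem (hT i) hB).inter (by simpa using (hT i).measurableSet_le' t)
    have hhm : StronglyMeasurable[(hT i).measurableSpace] h :=
      (stronglyMeasurable_const.indicator hset).mul (hNmeas i).stronglyMeasurable
    have hhbd : ∀ ω, |h ω| ≤ |N i ω| := by
      intro ω
      by_cases hω : ω ∈ B ∩ T i ⁻¹' Set.Ioc s t <;>
        simp [hh, Set.indicator_of_mem, Set.indicator_of_notMem, hω, abs_nonneg]
    have hkey : ∀ F : Ω → ℝ,
        ∫ ω in B, (T i ⁻¹' Set.Ioc s t).indicator (fun _ => (1 : ℝ)) ω * N i ω * F ω ∂P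
          = ∫ ω, h ω * F ω ∂P := by
      intro F
      rw [← integral_indicator hBamb]
      refine integral_congr_ae (ae_of_all _ fun ω => ?_)
      by_cases hω : ω ∈ B
      · by_cases hω2 : ω ∈ T i ⁻¹' Set.Ioc s t <;>
          simp [hh, Set.indicator_apply, hω, hω2, Set.mem_inter_iff]
      · simp [hh, Set.indicator_apply, hω, Set.mem_inter_iff]
    rw [hkey (ζ i), hkey (ξ i)]
    have hhξint : Integrable (fun ω => h ω * ξ i ω) P :=
      (hξint i).bdd_mul ((hhm.mono (hT i).measurableSpace_le).aestronglyMeasurable)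
        (ae_of_all _ fun ω => by rw [Real.norm_eq_abs]; exact (hhbd ω).trans (hCN ω))
    exact (pullout (hT i).measurableSpace_le hhm hhξint (hξint i) (hζ i)).symm
  refine ⟨part1, ?_⟩
  -- Part 2
  have hfun : ∀ (F : Fin K → Ω → ℝ) (ω : Ω),
      (∑ i, (T i ⁻¹' Set.Iic t).indicator (fun _ => (1 : ℝ)) ω * N i ω * F i ω)
        - (∑ i, (T i ⁻¹' Set.Iic s).indicator (fun _ => (1 : ℝ)) ω * N i ω * F i ω)
      = ∑ i, (T i ⁻¹' Set.Ioc s t).indicator (fun _ => (1 : ℝ)) ω * N i ω * F i ω := by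
    intro F ω
    rw [← Finset.sum_sub_distrib]
    refine Finset.sum_congr rfl fun i _ => ?_
    have hind : (T i ⁻¹' Set.Iic t).indicator (fun _ => (1 : ℝ)) ω
        - (T i ⁻¹' Set.Iic s).indicator (fun _ => (1 : ℝ)) ω
        = (T i ⁻¹' Set.Ioc s t).indicator (fun _ => (1 : ℝ)) ω := by
      by_cases h1 : T i ω ≤ s
      · have h2 : T i ω ≤ t := h1.trans hst
        simp [Set.indicator_apply, Set.mem_preimage, Set.mem_Iic, Set.mem_Ioc, h1, h2,
          not_lt.mpr h1]
      · by_cases h2 : T i ω ≤ t <;>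
          simp [Set.indicator_apply, Set.mem_preimage, Set.mem_Iic, Set.mem_Ioc, h1, h2,
            not_le.mp h1]
    rw [← hind]; ring
  set Ft : Ω → ℝ := fun ω => ∑ i, (T i ⁻¹' Set.Iic t).indicator (fun _ => (1 : ℝ)) ω
      * N i ω * ξ i ω with hFt
  set Fs : Ω → ℝ := fun ω => ∑ i, (T i ⁻¹' Set.Iic s).indicator (fun _ => (1 : ℝ)) ω
      * N i ω * ξ i ω with hFs
  set Gt : Ω → ℝ := fun ω => ∑ i, (T i ⁻¹' Set.Iic t).indicator (fun _ => (1 : ℝ)) ω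
      * N i ω * ζ i ω with hGt
  set Gs : Ω → ℝ := fun ω => ∑ i, (T i ⁻¹' Set.Iic s).indicator (fun _ => (1 : ℝ)) ω
      * N i ω * ζ i ω with hGs
  have hFt_int : Integrable Ft P := hsumξ _ measurableSet_Iic
  have hFs_int : Integrable Fs P := hsumξ _ measurableSet_Iic
  have hGt_int : Integrable Gt P := hsumζ _ measurableSet_Iic
  have hGs_int : Integrable Gs P := hsumζ _ measurableSet_Iic
  have e1 : P[(fun ω => ((P[Ft | ℱ t]) ω - Gt ω) - ((P[Fs | ℱ s]) ω - Gs ω)) | ℱ s]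
      =ᵐ[P] P[(P[Ft | ℱ t]) - Gt | ℱ s] - P[(P[Fs | ℱ s]) - Gs | ℱ s] :=
    condExp_sub (integrable_condExp.sub hGt_int) (integrable_condExp.sub hGs_int) _
  have e2 : P[(P[Ft | ℱ t]) - Gt | ℱ s] =ᵐ[P] P[(P[Ft | ℱ t]) | ℱ s] - P[Gt | ℱ s] :=
    condExp_sub integrable_condExp hGt_int _
  have e3 : P[(P[Ft | ℱ t]) | ℱ s] =ᵐ[P] P[Ft | ℱ s] :=
    condExp_condExp_of_le (ℱ.mono hst) (ℱ.le t)
  have e4 : P[(P[Fs | ℱ s]) - Gs | ℱ s] =ᵐ[P] P[(P[Fs | ℱ s]) | ℱ s] - P[Gs | ℱ s] :=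
    condExp_sub integrable_condExp hGs_int _
  have e5 : P[(P[Fs | ℱ s]) | ℱ s] =ᵐ[P] P[Fs | ℱ s] :=
    condExp_condExp_of_le le_rfl (ℱ.le s)
  have e6 : P[(fun ω => ∑ i, (T i ⁻¹' Set.Ioc s t).indicator (fun _ => (1 : ℝ)) ω
        * N i ω * ξ i ω) | ℱ s] =ᵐ[P] P[Ft | ℱ s] - P[Fs | ℱ s] := by
    have : (fun ω => ∑ i, (T i ⁻¹' Set.Ioc s t).indicator (fun _ => (1 : ℝ)) ω
        * N i ω * ξ i ω) = Ft - Fs := by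
      funext ω
      simp only [Pi.sub_apply, hFt, hFs]
      exact (hfun ξ ω).symm
    rw [this]
    exact condExp_sub hFt_int hFs_int _
  have e7 : P[(fun ω => ∑ i, (T i ⁻¹' Set.Ioc s t).indicator (fun _ => (1 : ℝ)) ω
        * N i ω * ζ i ω) | ℱ s] =ᵐ[P] P[Gt | ℱ s] - P[Gs | ℱ s] := by
    have : (fun ω => ∑ i, (T i ⁻¹' Set.Ioc s t).indicator (fun _ => (1 : ℝ)) ω
        * N i ω * ζ i ω) = Gt - Gs := by
      funext ω
      simp only [Pi.sub_apply, hGt, hGs]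
      exact (hfun ζ ω).symm
    rw [this]
    exact condExp_sub hGt_int hGs_int _
  filter_upwards [e1, e2, e3, e4, e5, e6, e7, part1] with ω h1 h2 h3 h4 h5 h6 h7 h8
  simp only [Pi.sub_apply] at h1 h2 h3 h4 h5 h6 h7
  simp only [Pi.zero_apply]
  rw [h1, h2, h3, h4, h5]
  linarith
end

section
/- Let (Ω, 𝓕, P) be a probability space, G ⊆ 𝓕 a sub-σ-algebra, and Z : Ω → (0,∞) an integrable random variable with E_P[Z] = 1. Let P′ := P.withDensity Z, a probability measure equivalent to P. Then for every P-integrable real random variable X one has, almost surely, E_{P′}[X · Z⁻¹ | G] = E_P[X | G] · E_{P′}[Z⁻¹ | G]; moreover E_{P′}[Z⁻¹ | G] > 0 almost surely, so that E_P[X | G] = E_{P′}[X Z⁻¹ | G] / E_{P′}[Z⁻¹ | G] a.s. -/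
open MeasureTheory ProbabilityTheory
open scoped ENNReal

/-- Abstract Bayes formula (Kallianpur–Striebel): for a strictly positive density `Z` with
`E_P[Z] = 1` and `P' = Z·P`, one has `E_{P'}[X Z⁻¹ | G] = E_P[X | G] · E_{P'}[Z⁻¹ | G]` a.s.,
`E_{P'}[Z⁻¹ | G] > 0` a.s., and hence `E_P[X | G] = E_{P'}[X Z⁻¹ | G] / E_{P'}[Z⁻¹ | G]` a.s. -/
theorem stmt4 {Ω : Type*} (G : MeasurableSpace Ω) [mΩ : MeasurableSpace Ω]
    (P : Measure Ω) [IsProbabilityMeasure P] (hG : G ≤ mΩ)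
    (Z : Ω → ℝ) (hZmeas : Measurable Z) (hZpos : ∀ ω, 0 < Z ω)
    (hZint : Integrable Z P) (hZmean : ∫ ω, Z ω ∂P = 1)
    (P' : Measure Ω) (hP' : P' = P.withDensity (fun ω => ENNReal.ofReal (Z ω)))
    (X : Ω → ℝ) (hX : Integrable X P) :
    (P'[(fun ω => X ω * (Z ω)⁻¹) | G]
        =ᵐ[P] fun ω => (P[X | G]) ω * (P'[(fun ω' => (Z ω')⁻¹) | G]) ω)
    ∧ (∀ᵐ ω ∂P, 0 < (P'[(fun ω' => (Z ω')⁻¹) | G]) ω)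
    ∧ (P[X | G]
        =ᵐ[P] fun ω => (P'[(fun ω' => X ω' * (Z ω')⁻¹) | G]) ω
          / (P'[(fun ω' => (Z ω')⁻¹) | G]) ω) := by
  have hZ0 : ∀ ω, Z ω ≠ 0 := fun ω => (hZpos ω).ne'
  have hρ : Measurable fun ω => ENNReal.ofReal (Z ω) := hZmeas.ennreal_ofReal
  have hρ_lt : ∀ᵐ ω ∂P, ENNReal.ofReal (Z ω) < ∞ :=
    Filter.Eventually.of_forall fun ω => ENNReal.ofReal_lt_top
  have hρ_ne0 : ∀ᵐ ω ∂P, ENNReal.ofReal (Z ω) ≠ 0 :=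
    Filter.Eventually.of_forall fun ω => (ENNReal.ofReal_pos.2 (hZpos ω)).ne'
  haveI hP'prob : IsProbabilityMeasure P' := by
    constructor
    rw [hP', withDensity_apply _ MeasurableSet.univ, setLIntegral_univ,
      ← ofReal_integral_eq_lintegral_ofReal hZint
        (Filter.Eventually.of_forall fun ω => (hZpos ω).le), hZmean]
    simp
  have hP'P : P' ≪ P := hP' ▸ withDensity_absolutelyContinuous _ _
  have hPP' : P ≪ P' := hP' ▸ withDensity_absolutelyContinuous' hρ.aemeasurable hρ_ne0
  -- transfer of set integrals between P' and P
  have hInt_eq : ∀ (f : Ω → ℝ) {s : Set Ω}, MeasurableSet s →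
      ∫ ω in s, f ω ∂P' = ∫ ω in s, f ω * Z ω ∂P := by
    intro f s hs
    have hcoe : (fun ω => ENNReal.ofReal (Z ω)) = fun ω => ((Z ω).toNNReal : ℝ≥0∞) := rfl
    rw [hP', hcoe, restrict_withDensity hs,
      integral_withDensity_eq_integral_smul hZmeas.real_toNNReal]
    refine integral_congr_ae (Filter.Eventually.of_forall fun ω => ?_)
    simp [NNReal.smul_def, Real.coe_toNNReal _ (hZpos ω).le, mul_comm]
  -- transfer of integrability
  have hIntble : ∀ {f : Ω → ℝ}, Integrable (fun ω => f ω * Z ω) P → Integrable f P' := by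
    intro f hf
    rw [hP', integrable_withDensity_iff hρ hρ_lt]
    refine hf.congr (Filter.Eventually.of_forall fun ω => ?_)
    simp [ENNReal.toReal_ofReal (hZpos ω).le]
  have hIntble' : ∀ {f : Ω → ℝ}, Integrable f P' → Integrable (fun ω => f ω * Z ω) P := by
    intro f hf
    rw [hP', integrable_withDensity_iff hρ hρ_lt] at hf
    refine hf.congr (Filter.Eventually.of_forall fun ω => ?_)
    simp [ENNReal.toReal_ofReal (hZpos ω).le]
  set g := P[Z|G] with hgdef
  have hg_meas : StronglyMeasurable[G] g := stronglyMeasurable_condExp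
  -- positivity of g = E[Z|G]
  have hg_pos : ∀ᵐ ω ∂P, 0 < g ω := by
    set s : Set Ω := {ω | g ω ≤ 0} with hsdef
    have hsG : MeasurableSet[G] s := hg_meas.measurable measurableSet_Iic
    have h1 : ∫ ω in s, g ω ∂P = ∫ ω in s, Z ω ∂P := setIntegral_condExp hG hZint hsG
    have h2 : ∫ ω in s, g ω ∂P ≤ 0 := setIntegral_nonpos (hG _ hsG) fun ω hω => hω
    have h3 : 0 ≤ ∫ ω in s, Z ω ∂P := setIntegral_nonneg (hG _ hsG) fun ω _ => (hZpos ω).le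
    have hz : ∫ ω in s, Z ω ∂P = 0 := le_antisymm (h1 ▸ h2) h3
    have hs0 : P s = 0 := by
      by_contra hne
      have hpos : 0 < ∫ ω in s, Z ω ∂P := by
        rw [setIntegral_pos_iff_support_of_nonneg_ae
          (Filter.Eventually.of_forall fun ω => (hZpos ω).le) (hZint.integrableOn)]
        have : Function.support Z = Set.univ := by
          ext ω; simp [Function.support, hZ0 ω]
        rw [this, Set.univ_inter]
        exact lt_of_le_of_ne zero_le (Ne.symm hne)
      exact absurd hz hpos.ne'
    rw [ae_iff]
    have : {ω | ¬0 < g ω} = s := by ext ω; simp [hsdef, not_lt]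
    rwa [this]
  -- key identity: E_{P'}[Y Z⁻¹|G] * g =ᵐ[P] E_P[Y|G]
  have key : ∀ (Y : Ω → ℝ), Integrable Y P →
      (fun ω => (P'[(fun ω' => Y ω' * (Z ω')⁻¹)|G]) ω * g ω) =ᵐ[P] P[Y|G] := by
    intro Y hY
    set W := P'[(fun ω' => Y ω' * (Z ω')⁻¹)|G] with hWdef
    have hYZ : Integrable (fun ω => Y ω * (Z ω)⁻¹) P' := by
      refine hIntble (hY.congr (Filter.Eventually.of_forall fun ω => ?_))
      simp [mul_assoc, inv_mul_cancel₀ (hZ0 ω)]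
    have hWmeas : StronglyMeasurable[G] W := stronglyMeasurable_condExp
    have hWint' : Integrable W P' := integrable_condExp
    have hWZ : Integrable (W * Z) P := hIntble' hWint'
    have hpull : P[(W * Z)|G] =ᵐ[P] W * g := condExp_mul_of_stronglyMeasurable_left hWmeas hWZ hZint
    refine ae_eq_condExp_of_forall_setIntegral_eq hG hY (fun s hs _ => ?_) (fun s hs _ => ?_)
      (StronglyMeasurable.aestronglyMeasurable (hWmeas.mul hg_meas))
    · exact (integrable_condExp.congr hpull).integrableOn
    · calc ∫ ω in s, W ω * g ω ∂P
          = ∫ ω in s, (P[(W * Z)|G]) ω ∂P :=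
            (setIntegral_congr_ae (hG _ hs)
              (hpull.mono fun ω hω _ => hω.symm))
        _ = ∫ ω in s, W ω * Z ω ∂P := setIntegral_condExp hG hWZ hs
        _ = ∫ ω in s, W ω ∂P' := (hInt_eq W (hG _ hs)).symm
        _ = ∫ ω in s, Y ω * (Z ω)⁻¹ ∂P' := setIntegral_condExp hG hYZ hs
        _ = ∫ ω in s, (Y ω * (Z ω)⁻¹) * Z ω ∂P := hInt_eq _ (hG _ hs)
        _ = ∫ ω in s, Y ω ∂P := by
            refine setIntegral_congr_ae (hG _ hs)
              (Filter.Eventually.of_forall fun ω _ => ?_)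
            rw [mul_assoc, inv_mul_cancel₀ (hZ0 ω), mul_one]
  have keyX := key X hX
  have key1 := key (fun _ => (1 : ℝ)) (integrable_const 1)
  have hone : (fun ω' => (fun _ : Ω => (1 : ℝ)) ω' * (Z ω')⁻¹) = fun ω' => (Z ω')⁻¹ := by
    funext ω'; rw [one_mul]
  rw [hone, condExp_const hG (1 : ℝ)] at key1
  set V := P'[(fun ω' => (Z ω')⁻¹)|G] with hVdef
  set W := P'[(fun ω' => X ω' * (Z ω')⁻¹)|G] with hWdef
  refine ⟨?_, ?_, ?_⟩
  · filter_upwards [keyX, key1, hg_pos] with ω h1 h2 h3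
    have hV : V ω = (g ω)⁻¹ := eq_inv_of_mul_eq_one_left h2
    rw [← h1, hV, mul_assoc, mul_inv_cancel₀ h3.ne', mul_one]
  · filter_upwards [key1, hg_pos] with ω h2 h3
    rw [eq_inv_of_mul_eq_one_left h2]
    exact inv_pos.2 h3
  · filter_upwards [keyX, key1, hg_pos] with ω h1 h2 h3
    have hV : V ω = (g ω)⁻¹ := eq_inv_of_mul_eq_one_left h2
    have hVne : V ω ≠ 0 := by rw [hV]; exact (inv_pos.2 h3).ne'
    rw [← h1, hV]
    field_simp
end

section
/- Let (Ω, 𝓕, P) be a probability space, G ⊆ 𝓕 a sub-σ-algebra, V : Ω → ℝⁿ measurable, and let κ be a Markov kernel from (Ω, G) to ℝⁿ such that for every bounded Borel g : ℝⁿ → ℝ the map ω ↦ ∫ g dκ(ω) is a version of E[g(V) | G]. Let F be a probability measure on ℝⁿ and L : Ω × ℝⁿ → [0,∞) a (G ⊗ Borel)-measurable function such that for P-almost every ω the measure (κ ω).withDensity (L(ω, ·)) equals F. Define Z(ω) := L(ω, V(ω)). Then (i) Z is integrable with E_P[Z] = 1, and (ii) for every bounded G-measurable W : Ω → ℝ and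 every bounded Borel g : ℝⁿ → ℝ, ∫ W(ω) g(V(ω)) Z(ω) dP(ω) = (∫ W dP) · (∫ g dF). In particular, under the changed measure P′ := P.withDensity Z the random vector V has law F and is independent of G. -/
open MeasureTheory ProbabilityTheory Set
open scoped ENNReal

lemma key_lintegral {Ω : Type*} (G : MeasurableSpace Ω) [mΩ : MeasurableSpace Ω]
    (P : Measure Ω) [IsProbabilityMeasure P] (hG : G ≤ mΩ)
    {n : ℕ} (V : Ω → (Fin n → ℝ)) (hV : Measurable V)
    (κ : Ω → Measure (Fin n → ℝ)) (hκmeas : Measurable[G] κ)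
    (hκprob : ∀ ω, IsProbabilityMeasure (κ ω))
    (hκcond : ∀ g : (Fin n → ℝ) → ℝ, Measurable g → (∃ C : ℝ, ∀ y, |g y| ≤ C) →
      (fun ω => ∫ y, g y ∂(κ ω)) =ᵐ[P] P[(fun ω => g (V ω)) | G])
    (f : Ω × (Fin n → ℝ) → ℝ≥0∞) (hf : Measurable[G.prod inferInstance] f) :
    ∫⁻ ω, f (ω, V ω) ∂P = ∫⁻ ω, ∫⁻ y, f (ω, y) ∂(κ ω) ∂P := by
  classical
  letI mprod : MeasurableSpace (Ω × (Fin n → ℝ)) := G.prod inferInstance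
  let k : Kernel[G] Ω (Fin n → ℝ) := @Kernel.mk Ω (Fin n → ℝ) G _ κ hκmeas
  have hk : ∀ a, k a = κ a := fun a => rfl
  haveI : @IsMarkovKernel Ω (Fin n → ℝ) G _ k := by
    constructor; intro a; rw [hk]; exact hκprob a
  haveI hPtrim : IsProbabilityMeasure (P.trim hG) :=
    ⟨by rw [trim_measurableSet_eq hG MeasurableSet.univ]; exact measure_univ⟩
  have hpair : @Measurable Ω (Ω × (Fin n → ℝ)) mΩ mprod (fun ω => (ω, V ω)) :=
    Measurable.prodMk (measurable_id'' hG) hV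
  set μmap : @Measure (Ω × (Fin n → ℝ)) mprod := @Measure.map Ω (Ω × (Fin n → ℝ)) mΩ mprod (fun ω => (ω, V ω)) P
    with hμmap
  set νcp : @Measure (Ω × (Fin n → ℝ)) mprod := @Measure.compProd Ω (Fin n → ℝ) G _ (P.trim hG) k with hνcp
  -- rectangle identity
  have hκB : ∀ (B : Set (Fin n → ℝ)), MeasurableSet B → Measurable[G] fun ω => κ ω B := fun B hB =>
    (Measure.measurable_coe hB).comp hκmeas
  have hrect : ∀ (A : Set Ω) (B : Set (Fin n → ℝ)), MeasurableSet[G] A → MeasurableSet B →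
      P (A ∩ V ⁻¹' B) = ∫⁻ ω in A, κ ω B ∂P := by
    intro A B hA hB
    have hAm : MeasurableSet A := hG _ hA
    have hg : Measurable (B.indicator (fun _ => (1:ℝ))) := measurable_const.indicator hB
    have hgb : ∃ C : ℝ, ∀ y, |B.indicator (fun _ => (1:ℝ)) y| ≤ C :=
      ⟨1, fun y => by by_cases h : y ∈ B <;> simp [Set.indicator_apply, h]⟩
    have hcond := hκcond _ hg hgb
    have hcomp : (fun ω => B.indicator (fun _ => (1:ℝ)) (V ω))
        = (V ⁻¹' B).indicator (fun _ => (1:ℝ)) := by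
      funext ω; by_cases h : V ω ∈ B <;> simp [Set.indicator_apply, h]
    have hint : Integrable (fun ω => B.indicator (fun _ => (1:ℝ)) (V ω)) P := by
      rw [hcomp]; exact (integrable_const (1:ℝ)).indicator (hV hB)
    -- real-valued chain
    have h1 : ∫ ω in A, ∫ y, B.indicator (fun _ => (1:ℝ)) y ∂(κ ω) ∂P
        = ∫ ω in A, B.indicator (fun _ => (1:ℝ)) (V ω) ∂P := by
      rw [setIntegral_congr_ae hAm (hcond.mono fun ω h _ => h)]
      exact setIntegral_condExp hG hint hA
    have h2 : ∀ ω, ∫ y, B.indicator (fun _ => (1:ℝ)) y ∂(κ ω) = (κ ω B).toReal := by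
      intro ω
      rw [integral_indicator_const (1:ℝ) hB]; simp; rfl
    have h3 : ∫ ω in A, B.indicator (fun _ => (1:ℝ)) (V ω) ∂P = (P (A ∩ V ⁻¹' B)).toReal := by
      rw [hcomp, integral_indicator_const (1:ℝ) (hV hB), measureReal_restrict_apply (hV hB)]
      simp [Set.inter_comm, measureReal_def]
    have h4 : ∫ ω in A, (κ ω B).toReal ∂P = (∫⁻ ω in A, κ ω B ∂P).toReal := by
      refine integral_toReal (((hκB B hB).mono hG le_rfl).aemeasurable) ?_
      exact Filter.Eventually.of_forall fun ω => by
        haveI := hκprob ω; exact measure_lt_top _ _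
    have h5 : (P (A ∩ V ⁻¹' B)).toReal = (∫⁻ ω in A, κ ω B ∂P).toReal := by
      rw [← h3, ← h1, ← h4]
      exact setIntegral_congr_ae hAm (Filter.Eventually.of_forall fun ω _ => h2 ω)
    have hfin1 : P (A ∩ V ⁻¹' B) ≠ ∞ := measure_ne_top _ _
    have hfin2 : ∫⁻ ω in A, κ ω B ∂P ≠ ∞ := by
      refine ne_of_lt (lt_of_le_of_lt ?_ (lt_of_le_of_lt (le_refl (P A)) ?_))
      · calc ∫⁻ ω in A, κ ω B ∂P ≤ ∫⁻ _ in A, 1 ∂P := by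
              refine lintegral_mono fun ω => ?_
              haveI := hκprob ω; exact prob_le_one
            _ = P A := by simp [Measure.restrict_apply_univ]
      · exact measure_lt_top _ _
    exact (ENNReal.toReal_eq_toReal_iff' hfin1 hfin2).mp h5
  -- measure equality
  haveI : IsProbabilityMeasure μmap := Measure.isProbabilityMeasure_map hpair.aemeasurable
  have hμν : μmap = νcp := by
    refine @ext_of_generate_finite (Ω × (Fin n → ℝ)) mprod μmap νcp
      (image2 (· ×ˢ ·) { s : Set Ω | MeasurableSet[G] s } { t : Set (Fin n → ℝ) | MeasurableSet t })
      (@generateFrom_prod Ω (Fin n → ℝ) G _).symm (@isPiSystem_prod Ω (Fin n → ℝ) G _) _ ?_ ?_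
    · rintro s ⟨A, hA, B, hB, rfl⟩
      have hA' : MeasurableSet[G] A := hA
      have hB' : MeasurableSet B := hB
      have hABm : MeasurableSet[mprod] (A ×ˢ B) := @MeasurableSet.prod Ω (Fin n → ℝ) G _ _ _ hA' hB'
      rw [hμmap, Measure.map_apply hpair hABm, Set.mk_preimage_prod]
      simp only [Set.preimage_id']
      rw [hrect A B hA' hB', hνcp, Measure.compProd_apply_prod hA' hB']
      calc ∫⁻ ω in A, κ ω B ∂P
          = ∫⁻ ω, A.indicator (fun ω => κ ω B) ω ∂P := (lintegral_indicator (hG _ hA') _).symm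
        _ = ∫⁻ ω, A.indicator (fun ω => κ ω B) ω ∂(P.trim hG) :=
            (lintegral_trim hG ((hκB B hB').indicator hA')).symm
        _ = ∫⁻ ω in A, k ω B ∂(P.trim hG) := lintegral_indicator hA' _
    · rw [hμmap, hνcp]
      rw [Measure.map_apply hpair MeasurableSet.univ]
      simp only [Set.preimage_univ]
      rw [Measure.compProd_apply_univ]
      rw [trim_measurableSet_eq hG MeasurableSet.univ]
  -- conclude
  have h1 : ∫⁻ ω, f (ω, V ω) ∂P = ∫⁻ p, f p ∂μmap :=
    (lintegral_map hf hpair).symm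
  rw [h1, hμν, hνcp, Measure.lintegral_compProd hf]
  refine lintegral_trim hG ?_
  exact Measurable.lintegral_kernel_prod_right (κ := k) hf

lemma key_lintegral2 {Ω : Type*} (G : MeasurableSpace Ω) [mΩ : MeasurableSpace Ω]
    (P : Measure Ω) [IsProbabilityMeasure P] (hG : G ≤ mΩ)
    {n : ℕ} (V : Ω → (Fin n → ℝ)) (hV : Measurable V)
    (κ : Ω → Measure (Fin n → ℝ)) (hκmeas : Measurable[G] κ)
    (hκprob : ∀ ω, IsProbabilityMeasure (κ ω))
    (hκcond : ∀ g : (Fin n → ℝ) → ℝ, Measurable g → (∃ C : ℝ, ∀ y, |g y| ≤ C) →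
      (fun ω => ∫ y, g y ∂(κ ω)) =ᵐ[P] P[(fun ω => g (V ω)) | G])
    (F : Measure (Fin n → ℝ)) [IsProbabilityMeasure F]
    (L : Ω → (Fin n → ℝ) → ℝ)
    (hLmeas : Measurable[G.prod inferInstance] (fun p : Ω × (Fin n → ℝ) => L p.1 p.2))
    (hLdens : ∀ᵐ ω ∂P, (κ ω).withDensity (fun y => ENNReal.ofReal (L ω y)) = F)
    (W' : Ω → ℝ≥0∞) (hW' : Measurable[G] W')
    (g' : (Fin n → ℝ) → ℝ≥0∞) (hg' : Measurable g') :
    ∫⁻ ω, W' ω * g' (V ω) * ENNReal.ofReal (L ω (V ω)) ∂P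
      = (∫⁻ ω, W' ω ∂P) * ∫⁻ y, g' y ∂F := by
  have hfst : @Measurable (Ω × (Fin n → ℝ)) Ω (G.prod inferInstance) G Prod.fst :=
    @measurable_fst Ω (Fin n → ℝ) G _
  have hsnd : Measurable[G.prod inferInstance] (Prod.snd : Ω × (Fin n → ℝ) → (Fin n → ℝ)) :=
    @measurable_snd Ω (Fin n → ℝ) G _
  set f : Ω × (Fin n → ℝ) → ℝ≥0∞ :=
    fun p => W' p.1 * g' p.2 * ENNReal.ofReal (L p.1 p.2) with hfdef
  have hfmeas : Measurable[G.prod inferInstance] f :=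
    ((hW'.comp hfst).mul (hg'.comp hsnd)).mul (ENNReal.measurable_ofReal.comp hLmeas)
  have hKEY := key_lintegral G P hG V hV κ hκmeas hκprob hκcond f hfmeas
  have hLsec : ∀ ω, Measurable fun y => L ω y := fun ω =>
    hLmeas.comp (@measurable_prodMk_left Ω (Fin n → ℝ) G _ ω)
  have hsec : ∀ ω, ∫⁻ y, f (ω, y) ∂(κ ω)
      = W' ω * ∫⁻ y, ENNReal.ofReal (L ω y) * g' y ∂(κ ω) := by
    intro ω
    have hm : Measurable fun y => ENNReal.ofReal (L ω y) * g' y :=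
      (ENNReal.measurable_ofReal.comp (hLsec ω)).mul hg'
    simp only [hfdef]
    rw [← lintegral_const_mul _ hm]
    congr 1; funext y; ring
  have hae : ∀ᵐ ω ∂P, ∫⁻ y, f (ω, y) ∂(κ ω) = W' ω * ∫⁻ y, g' y ∂F := by
    filter_upwards [hLdens] with ω hω
    have hm : Measurable fun y => ENNReal.ofReal (L ω y) :=
      ENNReal.measurable_ofReal.comp (hLsec ω)
    rw [hsec ω, ← hω, lintegral_withDensity_eq_lintegral_mul _ hm hg']
    rfl
  have hZeq : (fun ω => f (ω, V ω))
      = fun ω => W' ω * g' (V ω) * ENNReal.ofReal (L ω (V ω)) := rfl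
  rw [← hZeq, hKEY, lintegral_congr_ae hae,
    lintegral_mul_const _ (hW'.mono hG le_rfl)]

/-- Girsanov-type change of measure at a predictable time: if `κ` is a version of the conditional
law of `V` given `G`, `L(ω,·)` is a density with `(κ ω).withDensity (L(ω,·)) = F` a.e., and
`Z(ω) = L(ω, V(ω))`, then `Z` is integrable with `E_P[Z] = 1`,
`∫ W·(g∘V)·Z dP = (∫ W dP)·(∫ g dF)` for all bounded `G`-measurable `W` and bounded Borel `g`;
in particular under `P' = Z·P` the vector `V` has law `F` and is independent of `G`. -/
theorem stmt5 {Ω : Type*} (G : MeasurableSpace Ω) [mΩ : MeasurableSpace Ω]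
    (P : Measure Ω) [IsProbabilityMeasure P] (hG : G ≤ mΩ)
    {n : ℕ} (V : Ω → (Fin n → ℝ)) (hV : Measurable V)
    (κ : Ω → Measure (Fin n → ℝ)) (hκmeas : Measurable[G] κ)
    (hκprob : ∀ ω, IsProbabilityMeasure (κ ω))
    (hκcond : ∀ g : (Fin n → ℝ) → ℝ, Measurable g → (∃ C : ℝ, ∀ y, |g y| ≤ C) →
      (fun ω => ∫ y, g y ∂(κ ω)) =ᵐ[P] P[(fun ω => g (V ω)) | G])
    (F : Measure (Fin n → ℝ)) [IsProbabilityMeasure F]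
    (L : Ω → (Fin n → ℝ) → ℝ)
    (hLmeas : Measurable[G.prod inferInstance] (fun p : Ω × (Fin n → ℝ) => L p.1 p.2))
    (hLnonneg : ∀ ω y, 0 ≤ L ω y)
    (hLdens : ∀ᵐ ω ∂P, (κ ω).withDensity (fun y => ENNReal.ofReal (L ω y)) = F)
    (Z : Ω → ℝ) (hZ : ∀ ω, Z ω = L ω (V ω)) :
    (Integrable Z P ∧ ∫ ω, Z ω ∂P = 1)
    ∧ (∀ W : Ω → ℝ, Measurable[G] W → (∃ C : ℝ, ∀ ω, |W ω| ≤ C) →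
        ∀ g : (Fin n → ℝ) → ℝ, Measurable g → (∃ C : ℝ, ∀ y, |g y| ≤ C) →
        ∫ ω, W ω * g (V ω) * Z ω ∂P = (∫ ω, W ω ∂P) * (∫ y, g y ∂F))
    ∧ ((P.withDensity (fun ω => ENNReal.ofReal (Z ω))).map V = F)
    ∧ (ProbabilityTheory.Indep (MeasurableSpace.comap V inferInstance) G
        (P.withDensity (fun ω => ENNReal.ofReal (Z ω)))) := by
  classical
  have hpair : @Measurable Ω (Ω × (Fin n → ℝ)) mΩ (G.prod inferInstance) (fun ω => (ω, V ω)) :=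
    Measurable.prodMk (measurable_id'' hG) hV
  have hZfun : Z = fun ω => L ω (V ω) := funext hZ
  have hZmeas : Measurable Z := by rw [hZfun]; exact hLmeas.comp hpair
  have hZnn : ∀ ω, 0 ≤ Z ω := fun ω => (hZ ω) ▸ hLnonneg ω (V ω)
  have KEY2 := key_lintegral2 G P hG V hV κ hκmeas hκprob hκcond F L hLmeas hLdens
  -- (i)
  have hZ1 : ∫⁻ ω, ENNReal.ofReal (Z ω) ∂P = 1 := by
    have h := KEY2 (fun _ => 1) measurable_const (fun _ => 1) measurable_const
    simp only [one_mul, lintegral_one, measure_univ, mul_one] at h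
    rw [hZfun]
    exact h
  have hZint : Integrable Z P := by
    refine ⟨hZmeas.aestronglyMeasurable, ?_⟩
    rw [hasFiniteIntegral_iff_ofReal (Filter.Eventually.of_forall hZnn), hZ1]
    exact ENNReal.one_lt_top
  have hZint1 : ∫ ω, Z ω ∂P = 1 := by
    rw [integral_eq_lintegral_of_nonneg_ae (Filter.Eventually.of_forall hZnn)
      hZmeas.aestronglyMeasurable, hZ1, ENNReal.toReal_one]
  -- nonnegative product formula
  have hpos : ∀ W : Ω → ℝ, Measurable[G] W → (∀ ω, 0 ≤ W ω) → (∃ C : ℝ, ∀ ω, |W ω| ≤ C) →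
      ∀ g : (Fin n → ℝ) → ℝ, Measurable g → (∀ y, 0 ≤ g y) → (∃ C : ℝ, ∀ y, |g y| ≤ C) →
      ∫ ω, W ω * g (V ω) * Z ω ∂P = (∫ ω, W ω ∂P) * ∫ y, g y ∂F := by
    rintro W hW hWnn ⟨C, hC⟩ g hg hgnn ⟨D, hD⟩
    have hWm : Measurable W := hW.mono hG le_rfl
    have hWint : Integrable W P :=
      Integrable.mono' (integrable_const C) hWm.aestronglyMeasurable
        (Filter.Eventually.of_forall fun ω => by rw [Real.norm_eq_abs]; exact hC ω)
    have hgint : Integrable g F :=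
      Integrable.mono' (integrable_const D) hg.aestronglyMeasurable
        (Filter.Eventually.of_forall fun y => by rw [Real.norm_eq_abs]; exact hD y)
    have hprod_nn : ∀ ω, 0 ≤ W ω * g (V ω) * Z ω := fun ω =>
      mul_nonneg (mul_nonneg (hWnn ω) (hgnn _)) (hZnn ω)
    have hmeas : AEStronglyMeasurable (fun ω => W ω * g (V ω) * Z ω) P :=
      ((hWm.mul (hg.comp hV)).mul hZmeas).aestronglyMeasurable
    rw [integral_eq_lintegral_of_nonneg_ae (Filter.Eventually.of_forall hprod_nn) hmeas]
    have hofeq : ∀ ω, ENNReal.ofReal (W ω * g (V ω) * Z ω)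
        = ENNReal.ofReal (W ω) * ENNReal.ofReal (g (V ω)) * ENNReal.ofReal (L ω (V ω)) := by
      intro ω
      rw [ENNReal.ofReal_mul (mul_nonneg (hWnn ω) (hgnn _)), ENNReal.ofReal_mul (hWnn ω), hZ]
    simp_rw [hofeq]
    have hW' : Measurable[G] fun ω => ENNReal.ofReal (W ω) :=
      ENNReal.measurable_ofReal.comp hW
    have hg' : Measurable fun y => ENNReal.ofReal (g y) :=
      ENNReal.measurable_ofReal.comp hg
    rw [KEY2 _ hW' _ hg']
    rw [← ofReal_integral_eq_lintegral_ofReal hWint (Filter.Eventually.of_forall hWnn),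
        ← ofReal_integral_eq_lintegral_ofReal hgint (Filter.Eventually.of_forall hgnn),
        ← ENNReal.ofReal_mul (integral_nonneg hWnn)]
    exact ENNReal.toReal_ofReal
      (mul_nonneg (integral_nonneg hWnn) (integral_nonneg fun y => hgnn y))
  -- (ii) signed version
  have hii : ∀ W : Ω → ℝ, Measurable[G] W → (∃ C : ℝ, ∀ ω, |W ω| ≤ C) →
      ∀ g : (Fin n → ℝ) → ℝ, Measurable g → (∃ C : ℝ, ∀ y, |g y| ≤ C) →
      ∫ ω, W ω * g (V ω) * Z ω ∂P = (∫ ω, W ω ∂P) * ∫ y, g y ∂F := by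
    rintro W hW ⟨C, hC⟩ g hg ⟨D, hD⟩
    have hWm : Measurable W := hW.mono hG le_rfl
    -- positive and negative parts
    have hWp : Measurable[G] fun ω => max (W ω) 0 := hW.max measurable_const
    have hWn : Measurable[G] fun ω => max (-W ω) 0 := hW.neg.max measurable_const
    have hgp : Measurable fun y => max (g y) 0 := hg.max measurable_const
    have hgn : Measurable fun y => max (-g y) 0 := hg.neg.max measurable_const
    have hWpnn : ∀ ω, 0 ≤ max (W ω) 0 := fun ω => le_max_right _ _
    have hWnnn : ∀ ω, 0 ≤ max (-W ω) 0 := fun ω => le_max_right _ _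
    have hgpnn : ∀ y, 0 ≤ max (g y) 0 := fun y => le_max_right _ _
    have hgnnn : ∀ y, 0 ≤ max (-g y) 0 := fun y => le_max_right _ _
    have hWpb : ∀ ω, |max (W ω) 0| ≤ C := fun ω => by
      rw [abs_of_nonneg (hWpnn ω)]
      exact max_le (le_trans (le_abs_self _) (hC ω)) (le_trans (abs_nonneg _) (hC ω))
    have hWnb : ∀ ω, |max (-W ω) 0| ≤ C := fun ω => by
      rw [abs_of_nonneg (hWnnn ω)]
      exact max_le (le_trans (neg_le_abs _) (hC ω)) (le_trans (abs_nonneg _) (hC ω))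
    have hgpb : ∀ y, |max (g y) 0| ≤ D := fun y => by
      rw [abs_of_nonneg (hgpnn y)]
      exact max_le (le_trans (le_abs_self _) (hD y)) (le_trans (abs_nonneg _) (hD y))
    have hgnb : ∀ y, |max (-g y) 0| ≤ D := fun y => by
      rw [abs_of_nonneg (hgnnn y)]
      exact max_le (le_trans (neg_le_abs _) (hD y)) (le_trans (abs_nonneg _) (hD y))
    -- integrability of the four terms
    have hterm : ∀ W1 : Ω → ℝ, Measurable W1 → (∀ ω, 0 ≤ W1 ω) → (∀ ω, |W1 ω| ≤ C) →
        ∀ g1 : (Fin n → ℝ) → ℝ, Measurable g1 → (∀ y, 0 ≤ g1 y) → (∀ y, |g1 y| ≤ D) →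
        Integrable (fun ω => W1 ω * g1 (V ω) * Z ω) P := by
      intro W1 hW1 hW1nn hW1b g1 hg1 hg1nn hg1b
      refine Integrable.mono' (hZint.const_mul (C * D))
        ((hW1.mul (hg1.comp hV)).mul hZmeas).aestronglyMeasurable
        (Filter.Eventually.of_forall fun ω => ?_)
      rw [Real.norm_eq_abs, abs_of_nonneg (mul_nonneg (mul_nonneg (hW1nn ω) (hg1nn _)) (hZnn ω))]
      have h1 : W1 ω * g1 (V ω) ≤ C * D := by
        refine mul_le_mul ?_ ?_ (hg1nn _) (le_trans (abs_nonneg _) (hW1b ω))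
        · exact le_trans (le_abs_self _) (hW1b ω)
        · exact le_trans (le_abs_self _) (hg1b _)
      exact mul_le_mul_of_nonneg_right h1 (hZnn ω)
    have hI1 := hterm _ (hWp.mono hG le_rfl) hWpnn hWpb _ hgp hgpnn hgpb
    have hI2 := hterm _ (hWp.mono hG le_rfl) hWpnn hWpb _ hgn hgnnn hgnb
    have hI3 := hterm _ (hWn.mono hG le_rfl) hWnnn hWnb _ hgp hgpnn hgpb
    have hI4 := hterm _ (hWn.mono hG le_rfl) hWnnn hWnb _ hgn hgnnn hgnb
    -- values of the four terms
    have hE1 := hpos _ hWp hWpnn ⟨C, hWpb⟩ _ hgp hgpnn ⟨D, hgpb⟩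
    have hE2 := hpos _ hWp hWpnn ⟨C, hWpb⟩ _ hgn hgnnn ⟨D, hgnb⟩
    have hE3 := hpos _ hWn hWnnn ⟨C, hWnb⟩ _ hgp hgpnn ⟨D, hgpb⟩
    have hE4 := hpos _ hWn hWnnn ⟨C, hWnb⟩ _ hgn hgnnn ⟨D, hgnb⟩
    -- pointwise algebraic identity
    have key4 : ∀ a b z : ℝ, a * b * z
        = max a 0 * max b 0 * z - max a 0 * max (-b) 0 * z
          - max (-a) 0 * max b 0 * z + max (-a) 0 * max (-b) 0 * z := by
      intro a b z
      have ha : max a 0 - max (-a) 0 = a := max_zero_sub_max_neg_zero_eq_self a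
      have hb : max b 0 - max (-b) 0 = b := max_zero_sub_max_neg_zero_eq_self b
      calc a * b * z = (max a 0 - max (-a) 0) * (max b 0 - max (-b) 0) * z := by rw [ha, hb]
        _ = _ := by ring
    -- integrability of parts of W and g
    have hWpint : Integrable (fun ω => max (W ω) 0) P :=
      Integrable.mono' (integrable_const C) (hWm.max measurable_const).aestronglyMeasurable
        (Filter.Eventually.of_forall fun ω => by rw [Real.norm_eq_abs]; exact hWpb ω)
    have hWnint : Integrable (fun ω => max (-W ω) 0) P :=
      Integrable.mono' (integrable_const C) (hWm.neg.max measurable_const).aestronglyMeasurable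
        (Filter.Eventually.of_forall fun ω => by rw [Real.norm_eq_abs]; exact hWnb ω)
    have hgpint : Integrable (fun y => max (g y) 0) F :=
      Integrable.mono' (integrable_const D) (hg.max measurable_const).aestronglyMeasurable
        (Filter.Eventually.of_forall fun y => by rw [Real.norm_eq_abs]; exact hgpb y)
    have hgnint : Integrable (fun y => max (-g y) 0) F :=
      Integrable.mono' (integrable_const D) (hg.neg.max measurable_const).aestronglyMeasurable
        (Filter.Eventually.of_forall fun y => by rw [Real.norm_eq_abs]; exact hgnb y)
    have hWval : ∫ ω, W ω ∂P = (∫ ω, max (W ω) 0 ∂P) - ∫ ω, max (-W ω) 0 ∂P := by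
      rw [← integral_sub hWpint hWnint]
      congr 1; funext ω; exact (max_zero_sub_max_neg_zero_eq_self (W ω)).symm
    have hgval : ∫ y, g y ∂F = (∫ y, max (g y) 0 ∂F) - ∫ y, max (-g y) 0 ∂F := by
      rw [← integral_sub hgpint hgnint]
      congr 1; funext y; exact (max_zero_sub_max_neg_zero_eq_self (g y)).symm
    calc ∫ ω, W ω * g (V ω) * Z ω ∂P
        = ∫ ω, (max (W ω) 0 * max (g (V ω)) 0 * Z ω - max (W ω) 0 * max (-g (V ω)) 0 * Z ω
            - max (-W ω) 0 * max (g (V ω)) 0 * Z ω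
            + max (-W ω) 0 * max (-g (V ω)) 0 * Z ω) ∂P := by
          congr 1; funext ω; exact key4 (W ω) (g (V ω)) (Z ω)
      _ = (∫ ω, max (W ω) 0 * max (g (V ω)) 0 * Z ω ∂P)
            - (∫ ω, max (W ω) 0 * max (-g (V ω)) 0 * Z ω ∂P)
            - (∫ ω, max (-W ω) 0 * max (g (V ω)) 0 * Z ω ∂P)
            + ∫ ω, max (-W ω) 0 * max (-g (V ω)) 0 * Z ω ∂P := by
          have hI12 : Integrable (fun ω => max (W ω) 0 * max (g (V ω)) 0 * Z ω
              - max (W ω) 0 * max (-g (V ω)) 0 * Z ω) P := hI1.sub hI2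
          have hI123 : Integrable (fun ω => max (W ω) 0 * max (g (V ω)) 0 * Z ω
              - max (W ω) 0 * max (-g (V ω)) 0 * Z ω
              - max (-W ω) 0 * max (g (V ω)) 0 * Z ω) P := hI12.sub hI3
          rw [integral_add hI123 hI4, integral_sub hI12 hI3, integral_sub hI1 hI2]
      _ = (∫ ω, W ω ∂P) * ∫ y, g y ∂F := by
          rw [hE1, hE2, hE3, hE4, hWval, hgval]; ring
  -- mixed measure computation
  have hmix : ∀ A : Set Ω, MeasurableSet[G] A → ∀ B : Set (Fin n → ℝ), MeasurableSet B →
      P.withDensity (fun ω => ENNReal.ofReal (Z ω)) (V ⁻¹' B ∩ A) = P A * F B := by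
    intro A hA B hB
    rw [withDensity_apply _ ((hV hB).inter (hG _ hA))]
    have hone : Measurable[G] (1 : Ω → ℝ≥0∞) := @measurable_const ℝ≥0∞ Ω _ G 1
    have hW' : Measurable[G] (A.indicator (1 : Ω → ℝ≥0∞)) := hone.indicator hA
    have hg' : Measurable (B.indicator (1 : (Fin n → ℝ) → ℝ≥0∞)) := measurable_one.indicator hB
    have hKEY := KEY2 _ hW' _ hg'
    have heq : ∀ ω, (V ⁻¹' B ∩ A).indicator (fun ω => ENNReal.ofReal (Z ω)) ω
        = A.indicator (1 : Ω → ℝ≥0∞) ω * B.indicator (1 : (Fin n → ℝ) → ℝ≥0∞) (V ω)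
          * ENNReal.ofReal (L ω (V ω)) := by
      intro ω
      by_cases h1 : ω ∈ A <;> by_cases h2 : V ω ∈ B <;>
        simp [Set.indicator_apply, h1, h2, hZ ω]
    calc ∫⁻ ω in V ⁻¹' B ∩ A, ENNReal.ofReal (Z ω) ∂P
        = ∫⁻ ω, (V ⁻¹' B ∩ A).indicator (fun ω => ENNReal.ofReal (Z ω)) ω ∂P :=
          (lintegral_indicator ((hV hB).inter (hG _ hA)) _).symm
      _ = ∫⁻ ω, A.indicator (1 : Ω → ℝ≥0∞) ω * B.indicator (1 : (Fin n → ℝ) → ℝ≥0∞) (V ω)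
            * ENNReal.ofReal (L ω (V ω)) ∂P := lintegral_congr heq
      _ = (∫⁻ ω, A.indicator (1 : Ω → ℝ≥0∞) ω ∂P)
            * ∫⁻ y, B.indicator (1 : (Fin n → ℝ) → ℝ≥0∞) y ∂F := hKEY
      _ = P A * F B := by
          rw [lintegral_indicator_one (hG _ hA), lintegral_indicator_one hB]
  -- (iii)
  have hiii : (P.withDensity (fun ω => ENNReal.ofReal (Z ω))).map V = F := by
    refine Measure.ext fun B hB => ?_
    rw [Measure.map_apply hV hB]
    rw [withDensity_apply _ (hV hB)]
    have h := hmix Set.univ MeasurableSet.univ B hB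
    rw [Set.inter_univ, measure_univ, one_mul] at h
    rw [withDensity_apply _ (hV hB)] at h
    exact h
  -- (iv)
  have hiv : ProbabilityTheory.Indep (MeasurableSpace.comap V inferInstance) G
      (P.withDensity (fun ω => ENNReal.ofReal (Z ω))) := by
    rw [Indep_iff]
    rintro t1 t2 ⟨B, hB, rfl⟩ ht2
    have e1 := hmix t2 ht2 B hB
    have e2 := hmix Set.univ MeasurableSet.univ B hB
    rw [Set.inter_univ, measure_univ, one_mul] at e2
    have e3 := hmix t2 ht2 Set.univ MeasurableSet.univ
    rw [Set.preimage_univ, Set.univ_inter, measure_univ, mul_one] at e3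
    rw [e1, e2, e3, mul_comm]
  exact ⟨⟨hZint, hZint1⟩, hii, hiii, hiv⟩
end

section
/- Let (Ω, 𝓕, P) be a probability space, G ⊆ 𝓕 a sub-σ-algebra, V : Ω → ℝⁿ measurable, and κ a Markov kernel from (Ω, G) to ℝⁿ such that for every bounded Borel g the map ω ↦ ∫ g dκ(ω) is a version of E[g(V) | G]. Let F be a probability measure on ℝⁿ, and L : Ω × ℝⁿ → [0,∞) a (G ⊗ Borel)-measurable function with (κ ω).withDensity (L(ω,·)) = F for P-a.e. ω, and assume additionally κ ω ({y : L(ω,y) = 0}) = 0 for P-a.e. ω. Set Z(ω) := L(ω, V(ω)) and P′ := P.withDensity Z. Then Z > 0 P-almost surely and E_{P′}[Z⁻¹ | G] = 1 P′-almost surely; equivalently, for every bounded G-measurable W, ∫ W · (Z⁻¹ − 1) dP′ = 0. -/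
open MeasureTheory ProbabilityTheory MeasurableSpace Set
open scoped ENNReal

theorem aux_disint {Ω : Type*} {G mΩ : MeasurableSpace Ω} (hG : G ≤ mΩ)
    (P : Measure Ω) [IsFiniteMeasure P] {n : ℕ}
    {V : Ω → (Fin n → ℝ)} (hV : Measurable V)
    (κ : @Kernel Ω (Fin n → ℝ) G _) [IsMarkovKernel κ]
    (hbase : ∀ B : Set (Fin n → ℝ), MeasurableSet B → ∀ A : Set Ω, MeasurableSet[G] A →
      ∫⁻ ω in A, κ ω B ∂P = P (A ∩ V ⁻¹' B))
    (f : Ω × (Fin n → ℝ) → ℝ≥0∞) (hf : Measurable[G.prod inferInstance] f) :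
    ∫⁻ ω, f (ω, V ω) ∂P = ∫⁻ ω, ∫⁻ y, f (ω, y) ∂(κ ω) ∂P := by
  haveI : IsFiniteMeasure (P.trim hG) :=
    ⟨by rw [trim_measurableSet_eq hG MeasurableSet.univ]; exact measure_lt_top P _⟩
  have hT : @Measurable Ω (Ω × (Fin n → ℝ)) mΩ (G.prod inferInstance) (fun ω => (ω, V ω)) :=
    Measurable.prodMk (measurable_id'' hG) hV
  set μ₁ : @Measure (Ω × (Fin n → ℝ)) (G.prod inferInstance) :=
    @Measure.map Ω (Ω × (Fin n → ℝ)) mΩ (G.prod inferInstance) (fun ω => (ω, V ω)) P with hμ₁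
  haveI : IsFiniteMeasure μ₁ := by
    constructor
    rw [hμ₁, Measure.map_apply hT MeasurableSet.univ]
    exact measure_lt_top P _
  have hμ : μ₁ = (P.trim hG).compProd κ := by
    refine @ext_of_generate_finite _ (G.prod inferInstance) _ _ _
      (@generateFrom_prod Ω (Fin n → ℝ) G _).symm (@isPiSystem_prod Ω (Fin n → ℝ) G _) _
      ?_ ?_
    · rintro s ⟨A, hA, B, hB, rfl⟩
      simp only [Set.mem_setOf_eq] at hA hB
      rw [hμ₁, Measure.map_apply hT (hA.prod hB),
        Measure.compProd_apply_prod hA hB]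
      have h1 : ∫⁻ ω in A, κ ω B ∂(P.trim hG) = ∫⁻ ω in A, κ ω B ∂P := by
        rw [← lintegral_indicator hA, ← lintegral_indicator (hG _ hA),
          lintegral_trim hG (((Kernel.measurable_coe κ hB)).indicator hA)]
      rw [h1, hbase B hB A hA]
      rfl
    · rw [hμ₁, Measure.map_apply hT MeasurableSet.univ,
        Measure.compProd_apply_univ, trim_measurableSet_eq hG MeasurableSet.univ]
      rfl
  calc ∫⁻ ω, f (ω, V ω) ∂P = ∫⁻ p, f p ∂μ₁ := by
        rw [hμ₁, @lintegral_map _ _ mΩ (G.prod inferInstance) _ _ _ hf hT]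
    _ = ∫⁻ ω, ∫⁻ y, f (ω, y) ∂(κ ω) ∂(P.trim hG) := by
        rw [hμ, Measure.lintegral_compProd hf]
    _ = ∫⁻ ω, ∫⁻ y, f (ω, y) ∂(κ ω) ∂P :=
        lintegral_trim hG (Measurable.lintegral_kernel_prod_right hf)

/-- One-step form of the martingale property of the unnormalized mass `ρ(1) = Z⁻¹`: if moreover
`κ ω ({L(ω,·) = 0}) = 0` a.e., then `Z > 0` `P`-a.s., `E_{P'}[Z⁻¹ | G] = 1` `P'`-a.s., and
equivalently `∫ W (Z⁻¹ − 1) dP' = 0` for every bounded `G`-measurable `W`. -/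
theorem stmt6 {Ω : Type*} (G : MeasurableSpace Ω) [mΩ : MeasurableSpace Ω]
    (P : Measure Ω) [IsProbabilityMeasure P] (hG : G ≤ mΩ)
    {n : ℕ} (V : Ω → (Fin n → ℝ)) (hV : Measurable V)
    (κ : Ω → Measure (Fin n → ℝ)) (hκmeas : Measurable[G] κ)
    (hκprob : ∀ ω, IsProbabilityMeasure (κ ω))
    (hκcond : ∀ g : (Fin n → ℝ) → ℝ, Measurable g → (∃ C : ℝ, ∀ y, |g y| ≤ C) →
      (fun ω => ∫ y, g y ∂(κ ω)) =ᵐ[P] P[(fun ω => g (V ω)) | G])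
    (F : Measure (Fin n → ℝ)) [IsProbabilityMeasure F]
    (L : Ω → (Fin n → ℝ) → ℝ)
    (hLmeas : Measurable[G.prod inferInstance] (fun p : Ω × (Fin n → ℝ) => L p.1 p.2))
    (hLnonneg : ∀ ω y, 0 ≤ L ω y)
    (hLdens : ∀ᵐ ω ∂P, (κ ω).withDensity (fun y => ENNReal.ofReal (L ω y)) = F)
    (hLpos : ∀ᵐ ω ∂P, κ ω {y | L ω y = 0} = 0)
    (Z : Ω → ℝ) (hZ : ∀ ω, Z ω = L ω (V ω))
    (P' : Measure Ω) (hP' : P' = P.withDensity (fun ω => ENNReal.ofReal (Z ω))) :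
    (∀ᵐ ω ∂P, 0 < Z ω)
    ∧ (P'[(fun ω => (Z ω)⁻¹) | G] =ᵐ[P'] fun _ => (1 : ℝ))
    ∧ (∀ W : Ω → ℝ, Measurable[G] W → (∃ C : ℝ, ∀ ω, |W ω| ≤ C) →
        ∫ ω, W ω * ((Z ω)⁻¹ - 1) ∂P' = 0) := by
  -- the kernel
  set κ' : @Kernel Ω (Fin n → ℝ) G _ := @Kernel.mk Ω (Fin n → ℝ) G _ κ hκmeas with hκ'
  have hκ'app : ∀ ω, κ' ω = κ ω := fun ω => rfl
  haveI : IsMarkovKernel κ' := ⟨fun ω => by rw [hκ'app]; exact hκprob ω⟩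
  -- basic measurability
  have hZmeas : Measurable Z := by
    have : Measurable (fun ω => L ω (V ω)) :=
      hLmeas.comp (Measurable.prodMk (measurable_id'' hG) hV)
    simpa [funext hZ] using this
  have hZnonneg : ∀ ω, 0 ≤ Z ω := fun ω => (hZ ω) ▸ hLnonneg ω (V ω)
  -- the base case for the disintegration lemma
  have hbase : ∀ B : Set (Fin n → ℝ), MeasurableSet B → ∀ A : Set Ω, MeasurableSet[G] A →
      ∫⁻ ω in A, κ' ω B ∂P = P (A ∩ V ⁻¹' B) := by
    intro B hB A hA
    simp only [hκ'app]
    have hκB : Measurable (fun ω => κ ω B) :=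
      ((Measure.measurable_coe hB).comp hκmeas).mono hG le_rfl
    set g : (Fin n → ℝ) → ℝ := B.indicator (fun _ => 1) with hg
    have hgmeas : Measurable g := measurable_const.indicator hB
    have hgbdd : ∃ C : ℝ, ∀ y, |g y| ≤ C :=
      ⟨1, fun y => by by_cases h : y ∈ B <;> simp [hg, Set.indicator_apply, h]⟩
    have hone := hκcond g hgmeas hgbdd
    have hgκ : ∀ ω, ∫ y, g y ∂(κ ω) = (κ ω B).toReal := by
      intro ω
      rw [hg, integral_indicator_const (1 : ℝ) hB, smul_eq_mul, mul_one]
      rfl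
    have hone' : (fun ω => (κ ω B).toReal) =ᵐ[P] P[(fun ω => g (V ω)) | G] := by
      filter_upwards [hone] with ω hω using (hgκ ω) ▸ hω
    have hint : Integrable (fun ω => g (V ω)) P := by
      have : (fun ω => g (V ω)) = (V ⁻¹' B).indicator (fun _ => (1:ℝ)) := by
        funext ω; by_cases h : V ω ∈ B <;>
          simp [hg, Set.indicator_apply, h, Set.mem_preimage]
      rw [this]
      exact (integrable_const (1:ℝ)).indicator (hV hB)
    have hreal : ∫ ω in A, (κ ω B).toReal ∂P = (P (A ∩ V ⁻¹' B)).toReal := by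
      have h2 : ∫ ω in A, (κ ω B).toReal ∂P
          = ∫ ω in A, (P[(fun ω => g (V ω)) | G]) ω ∂P :=
        integral_congr_ae (ae_restrict_of_ae hone')
      have h3 : ∫ ω in A, (P[(fun ω => g (V ω)) | G]) ω ∂P = ∫ ω in A, g (V ω) ∂P :=
        setIntegral_condExp hG hint hA
      have h4 : ∫ ω in A, g (V ω) ∂P = (P (A ∩ V ⁻¹' B)).toReal := by
        have : (fun ω => g (V ω)) = (V ⁻¹' B).indicator (fun _ => (1:ℝ)) := by
          funext ω; by_cases h : V ω ∈ B <;>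
            simp [hg, Set.indicator_apply, h, Set.mem_preimage]
        rw [this, integral_indicator_const (1 : ℝ) (hV hB), smul_eq_mul, mul_one,
          Measure.real, Measure.restrict_apply (hV hB), Set.inter_comm]
      rw [h2, h3, h4]
    -- transfer to lintegral
    have hκBint : Integrable (fun ω => (κ ω B).toReal) (P.restrict A) := by
      refine (integrable_const (1:ℝ)).mono' (hκB.ennreal_toReal.aestronglyMeasurable) ?_
      refine Filter.Eventually.of_forall fun ω => ?_
      haveI := hκprob ω
      rw [Real.norm_eq_abs, abs_of_nonneg ENNReal.toReal_nonneg]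
      simpa using ENNReal.toReal_mono ENNReal.one_ne_top prob_le_one
    calc ∫⁻ ω in A, κ ω B ∂P
        = ∫⁻ ω in A, ENNReal.ofReal ((κ ω B).toReal) ∂P := by
          refine lintegral_congr fun ω => ?_
          haveI := hκprob ω
          rw [ENNReal.ofReal_toReal (measure_ne_top _ _)]
      _ = ENNReal.ofReal (∫ ω in A, (κ ω B).toReal ∂P) :=
          (ofReal_integral_eq_lintegral_ofReal hκBint
            (Filter.Eventually.of_forall fun ω => ENNReal.toReal_nonneg)).symm
      _ = P (A ∩ V ⁻¹' B) := by
          rw [hreal, ENNReal.ofReal_toReal (measure_ne_top _ _)]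
  -- key identity : ∫⁻_A Z dP = P A for A ∈ G
  have hKey : ∀ A : Set Ω, MeasurableSet[G] A →
      ∫⁻ ω in A, ENNReal.ofReal (Z ω) ∂P = P A := by
    intro A hA
    have hSA : MeasurableSet[G.prod inferInstance] (A ×ˢ (Set.univ : Set (Fin n → ℝ))) :=
      @MeasurableSet.prod Ω (Fin n → ℝ) G _ _ _ hA MeasurableSet.univ
    have hfm : Measurable[G.prod inferInstance]
        ((A ×ˢ (Set.univ : Set (Fin n → ℝ))).indicator
          (fun p : Ω × (Fin n → ℝ) => ENNReal.ofReal (L p.1 p.2))) :=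
      (hLmeas.ennreal_ofReal).indicator hSA
    have h := aux_disint hG P hV κ' hbase _ hfm
    have hleft : (fun ω => (A ×ˢ (Set.univ : Set (Fin n → ℝ))).indicator
        (fun p : Ω × (Fin n → ℝ) => ENNReal.ofReal (L p.1 p.2)) (ω, V ω))
        = A.indicator (fun ω => ENNReal.ofReal (Z ω)) := by
      funext ω
      by_cases hω : ω ∈ A <;>
        simp [Set.indicator_apply, hω, hZ ω]
    have hright : (fun ω => ∫⁻ y, (A ×ˢ (Set.univ : Set (Fin n → ℝ))).indicator
        (fun p : Ω × (Fin n → ℝ) => ENNReal.ofReal (L p.1 p.2)) (ω, y) ∂(κ' ω))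
        =ᵐ[P] A.indicator (fun _ => 1) := by
      filter_upwards [hLdens] with ω hω
      by_cases hωA : ω ∈ A
      · have : (fun y => (A ×ˢ (Set.univ : Set (Fin n → ℝ))).indicator
            (fun p : Ω × (Fin n → ℝ) => ENNReal.ofReal (L p.1 p.2)) (ω, y))
            = fun y => ENNReal.ofReal (L ω y) := by
          funext y; simp [Set.indicator_apply, hωA]
        rw [this]
        have h1 : ∫⁻ y, ENNReal.ofReal (L ω y) ∂(κ ω)
            = ((κ ω).withDensity (fun y => ENNReal.ofReal (L ω y))) Set.univ := by
          rw [withDensity_apply _ MeasurableSet.univ, Measure.restrict_univ]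
        rw [hκ'app, h1, hω, Set.indicator_of_mem hωA]
        simp
      · have : (fun y => (A ×ˢ (Set.univ : Set (Fin n → ℝ))).indicator
            (fun p : Ω × (Fin n → ℝ) => ENNReal.ofReal (L p.1 p.2)) (ω, y))
            = fun _ => 0 := by
          funext y; simp [Set.indicator_apply, hωA]
        rw [hκ'app, this, Set.indicator_of_notMem hωA]
        simp
    rw [hleft, lintegral_indicator (hG _ hA)] at h
    rw [h, lintegral_congr_ae hright, lintegral_indicator (hG _ hA)]
    simp
  -- P' is a probability measure with P' A = P A on G
  have hP'G : ∀ A : Set Ω, MeasurableSet[G] A → P' A = P A := by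
    intro A hA
    rw [hP', withDensity_apply _ (hG _ hA)]
    exact hKey A hA
  haveI : IsProbabilityMeasure P' :=
    ⟨by rw [hP'G Set.univ MeasurableSet.univ]; exact measure_univ⟩
  -- part 1 : Z > 0 a.s.
  have hpart1 : ∀ᵐ ω ∂P, 0 < Z ω := by
    have hS : MeasurableSet[G.prod inferInstance]
        {p : Ω × (Fin n → ℝ) | L p.1 p.2 = 0} :=
      hLmeas (measurableSet_singleton 0)
    have hfm : Measurable[G.prod inferInstance]
        ({p : Ω × (Fin n → ℝ) | L p.1 p.2 = 0}.indicator (fun _ => (1 : ℝ≥0∞))) :=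
      measurable_const.indicator hS
    have h := aux_disint hG P hV κ' hbase _ hfm
    have hright : (fun ω => ∫⁻ y, {p : Ω × (Fin n → ℝ) | L p.1 p.2 = 0}.indicator
        (fun _ => (1 : ℝ≥0∞)) (ω, y) ∂(κ' ω)) =ᵐ[P] fun _ => 0 := by
      filter_upwards [hLpos] with ω hω
      have hsec : (fun y => {p : Ω × (Fin n → ℝ) | L p.1 p.2 = 0}.indicator
          (fun _ => (1 : ℝ≥0∞)) (ω, y)) = {y | L ω y = 0}.indicator (fun _ => 1) := by
        funext y; by_cases hy : L ω y = 0 <;> simp [Set.indicator_apply, hy]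
      have hsecm : MeasurableSet {y | L ω y = 0} := by
        have : Measurable (fun y => L ω y) :=
          hLmeas.comp (Measurable.prodMk measurable_const measurable_id)
        exact this (measurableSet_singleton 0)
      rw [hκ'app, hsec, lintegral_indicator hsecm]
      simp [hω]
    have hleft : (fun ω => {p : Ω × (Fin n → ℝ) | L p.1 p.2 = 0}.indicator
        (fun _ => (1 : ℝ≥0∞)) (ω, V ω)) = {ω | Z ω = 0}.indicator (fun _ => 1) := by
      funext ω
      by_cases hω : Z ω = 0 <;> simp [Set.indicator_apply, hZ ω ▸ hω, hω, hZ ω]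
    rw [hleft, lintegral_indicator
        (show MeasurableSet {ω | Z ω = 0} from hZmeas (measurableSet_singleton 0)),
      lintegral_congr_ae hright, lintegral_zero] at h
    simp only [lintegral_one, Measure.restrict_apply MeasurableSet.univ,
      Set.univ_inter, one_mul] at h
    have hZ0 : P {ω | Z ω = 0} = 0 := by
      have := h
      simpa using this
    have hne : ∀ᵐ ω ∂P, Z ω ≠ 0 := by
      rw [ae_iff]
      simpa using hZ0
    filter_upwards [hne] with ω hω
    exact lt_of_le_of_ne (hZnonneg ω) (Ne.symm hω)
  refine ⟨hpart1, ?_⟩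
  -- Z > 0 also P'-a.s. context pieces
  have hρnn : (fun ω => ENNReal.ofReal (Z ω)) = fun ω => ((Z ω).toNNReal : ℝ≥0∞) := rfl
  have hZinv_int : Integrable (fun ω => (Z ω)⁻¹) P' := by
    constructor
    · exact hZmeas.inv.aestronglyMeasurable
    · rw [hasFiniteIntegral_iff_norm, hP']
      rw [lintegral_withDensity_eq_lintegral_mul _ hZmeas.ennreal_ofReal
        (show Measurable (fun ω => ENNReal.ofReal ‖(Z ω)⁻¹‖) from
          hZmeas.inv.norm.ennreal_ofReal)]
      have hb : ∀ ω, (ENNReal.ofReal (Z ω) * ENNReal.ofReal ‖(Z ω)⁻¹‖) ≤ 1 := by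
        intro ω
        rw [Real.norm_eq_abs, abs_of_nonneg (inv_nonneg.2 (hZnonneg ω)),
          ← ENNReal.ofReal_mul (hZnonneg ω)]
        rcases eq_or_ne (Z ω) 0 with h | h
        · simp [h]
        · rw [mul_inv_cancel₀ h]; simp
      calc ∫⁻ ω, (fun ω => ENNReal.ofReal (Z ω)) ω * ENNReal.ofReal ‖(Z ω)⁻¹‖ ∂P
          ≤ ∫⁻ _, 1 ∂P := lintegral_mono fun ω => hb ω
        _ < ⊤ := by simp
  haveI : IsFiniteMeasure (P'.trim hG) :=
    ⟨by rw [trim_measurableSet_eq hG MeasurableSet.univ]; exact measure_lt_top P' _⟩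
  -- Z > 0 holds P'-a.e. as well? we only need set integrals
  have hsetInt : ∀ s : Set Ω, MeasurableSet[G] s → P' s < ∞ →
      ∫ ω in s, (1 : ℝ) ∂P' = ∫ ω in s, (Z ω)⁻¹ ∂P' := by
    intro s hs _
    have hs' : MeasurableSet s := hG _ hs
    have hrhs : ∫ ω in s, (Z ω)⁻¹ ∂P' = ∫ ω in s, ((Z ω).toNNReal : ℝ) • (Z ω)⁻¹ ∂P := by
      rw [hP', hρnn]
      exact setIntegral_withDensity_eq_setIntegral_smul
        (hZmeas.real_toNNReal) _ hs'
    have hae : (fun ω => ((Z ω).toNNReal : ℝ) • (Z ω)⁻¹) =ᵐ[P] fun _ => (1:ℝ) := by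
      filter_upwards [hpart1] with ω hω
      rw [smul_eq_mul, Real.coe_toNNReal _ (hZnonneg ω), mul_inv_cancel₀ (ne_of_gt hω)]
    rw [hrhs, integral_congr_ae (ae_restrict_of_ae hae)]
    rw [setIntegral_const, setIntegral_const, smul_eq_mul, mul_one, smul_eq_mul, mul_one,
      Measure.real, Measure.real, hP'G s hs]
  have hcond : (fun _ : Ω => (1:ℝ)) =ᵐ[P'] P'[(fun ω => (Z ω)⁻¹) | G] := by
    refine ae_eq_condExp_of_forall_setIntegral_eq hG hZinv_int
      (fun s hs hμs => (integrableOn_const hμs.ne)) (fun s hs hμs => hsetInt s hs hμs)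
      ?_
    exact aestronglyMeasurable_const
  refine ⟨hcond.symm, ?_⟩
  -- part 3
  intro W hWmeas hWbdd
  obtain ⟨C, hC⟩ := hWbdd
  have hWsm : StronglyMeasurable[G] W := hWmeas.stronglyMeasurable
  have hWm : Measurable W := hWmeas.mono hG le_rfl
  have hgint : Integrable (fun ω => (Z ω)⁻¹ - 1) P' := hZinv_int.sub (integrable_const 1)
  have hWg : Integrable (fun ω => W ω * ((Z ω)⁻¹ - 1)) P' :=
    hgint.bdd_mul (c := C) hWm.aestronglyMeasurable
        (Filter.Eventually.of_forall fun ω => by rw [Real.norm_eq_abs]; exact hC ω)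
  have hsub : (fun ω => (Z ω)⁻¹ - 1)
      = (fun ω => (Z ω)⁻¹) - (fun _ : Ω => (1:ℝ)) := rfl
  have h0 : P'[(fun ω => (Z ω)⁻¹ - 1) | G] =ᵐ[P'] fun _ => (0:ℝ) := by
    have h1 := condExp_sub (μ := P') (m := G) hZinv_int (integrable_const (1:ℝ))
    rw [← hsub] at h1
    have h2 : P'[(fun _ : Ω => (1:ℝ)) | G] = fun _ => (1:ℝ) := condExp_const hG 1
    filter_upwards [h1, hcond.symm] with ω hω h1ω
    rw [hω]
    simp only [Pi.sub_apply, h2, h1ω]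
    ring
  have hpull : P'[(fun ω => W ω * ((Z ω)⁻¹ - 1)) | G]
      =ᵐ[P'] fun ω => W ω * (P'[(fun ω => (Z ω)⁻¹ - 1) | G]) ω := by
    exact condExp_mul_of_stronglyMeasurable_left hWsm hWg hgint
  calc ∫ ω, W ω * ((Z ω)⁻¹ - 1) ∂P'
      = ∫ ω, (P'[(fun ω => W ω * ((Z ω)⁻¹ - 1)) | G]) ω ∂P' :=
        (integral_condExp hG).symm
    _ = 0 := by
        have : (P'[(fun ω => W ω * ((Z ω)⁻¹ - 1)) | G]) =ᵐ[P'] fun _ => (0:ℝ) := by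
          filter_upwards [hpull, h0] with ω hω h0ω
          rw [hω, h0ω, mul_zero]
        rw [integral_congr_ae this, integral_zero]
end

section
/- Let X, ξ, η be independent real random variables on a probability space with laws gaussianReal m P, gaussianReal 0 Q and gaussianReal 0 R respectively, where m ∈ ℝ, P, Q ≥ 0, R > 0, and let a ∈ ℝ. Set X̂ := X + ξ, Y := a·X̂ + η, P̂ := P + Q, S := a²·P̂ + R and K := P̂·a / S. Then the conditional distribution of X̂ given Y satisfies: for (law of Y)-almost every y ∈ ℝ, condDistrib X̂ Y P evaluated at y equals the Gaussian measure gaussianReal (m + K·(y − a·m)) (P̂ − K·a·P̂). -/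
open MeasureTheory ProbabilityTheory Real
open scoped NNReal ENNReal

lemma lintegral_gaussianReal {v : ℝ≥0} (hv : v ≠ 0) (c : ℝ) {f : ℝ → ℝ≥0∞} (hf : Measurable f) :
    ∫⁻ x, f x ∂(gaussianReal c v) = ∫⁻ x, gaussianPDF c v x * f x := by
  rw [gaussianReal_of_var_ne_zero c hv,
    lintegral_withDensity_eq_lintegral_mul _ (measurable_gaussianPDF c v) hf]
  rfl

lemma measurable_gauss2 (b c : ℝ) (w : ℝ≥0) :
    Measurable (fun z : ℝ × ℝ => gaussianPDF (b + c * z.1) w z.2) := by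
  apply Measurable.ennreal_ofReal
  unfold gaussianPDFReal
  fun_prop

lemma measurable_gaussianPDF' {α} [MeasurableSpace α] {f g : α → ℝ} (hf : Measurable f)
    (hg : Measurable g) (w : ℝ≥0) : Measurable fun z => gaussianPDF (f z) w (g z) := by
  apply Measurable.ennreal_ofReal
  unfold gaussianPDFReal
  fun_prop

noncomputable def gKer (b c : ℝ) (w : ℝ≥0) : Kernel ℝ ℝ where
  toFun y := gaussianReal (b + c * y) w
  measurable' := by
    rcases eq_or_ne w 0 with h | h
    · simp only [h, gaussianReal_zero_var]
      exact Measure.measurable_dirac.comp (by fun_prop)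
    · refine Measure.measurable_of_measurable_coe _ fun s hs => ?_
      simp_rw [gaussianReal_apply _ h _]
      exact (measurable_gauss2 b c w).lintegral_prod_right'

lemma gKer_apply (b c : ℝ) (w : ℝ≥0) (y : ℝ) : gKer b c w y = gaussianReal (b + c * y) w := rfl

instance (b c : ℝ) (w : ℝ≥0) : IsMarkovKernel (gKer b c w) :=
  ⟨fun _ => inferInstanceAs (IsProbabilityMeasure (gaussianReal _ _))⟩

lemma gauss_factor {p r : ℝ} (hp : 0 < p) (hr : 0 < r) (a m u y : ℝ) :
    gaussianPDFReal m p.toNNReal u * gaussianPDFReal (a*u) r.toNNReal y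
    = gaussianPDFReal (a*m) (a^2*p+r).toNNReal y *
      gaussianPDFReal (m + (p*a/(a^2*p+r))*(y - a*m)) (p*r/(a^2*p+r)).toNNReal u := by
  have hS : 0 < a^2*p+r := by positivity
  have hw : 0 < p*r/(a^2*p+r) := by positivity
  simp only [gaussianPDFReal, Real.coe_toNNReal _ hp.le, Real.coe_toNNReal _ hr.le,
    Real.coe_toNNReal _ hS.le, Real.coe_toNNReal _ hw.le]
  have e1 : (Real.sqrt (2*π*p))⁻¹ * (Real.sqrt (2*π*r))⁻¹
      = (Real.sqrt (2*π*(a^2*p+r)))⁻¹ * (Real.sqrt (2*π*(p*r/(a^2*p+r))))⁻¹ := by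
    rw [← mul_inv, ← mul_inv, ← Real.sqrt_mul (by positivity), ← Real.sqrt_mul (by positivity)]
    congr 2
    field_simp
  have e2 : Real.exp (-(u - m)^2/(2*p)) * Real.exp (-(y - a*u)^2/(2*r))
      = Real.exp (-(y - a*m)^2/(2*(a^2*p+r))) *
        Real.exp (-(u - (m + p*a/(a^2*p+r)*(y - a*m)))^2/(2*(p*r/(a^2*p+r)))) := by
    rw [← Real.exp_add, ← Real.exp_add]
    congr 1
    field_simp
    ring
  calc (Real.sqrt (2*π*p))⁻¹ * Real.exp (-(u - m)^2/(2*p)) *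
        ((Real.sqrt (2*π*r))⁻¹ * Real.exp (-(y - a*u)^2/(2*r)))
      = (Real.sqrt (2*π*p))⁻¹ * (Real.sqrt (2*π*r))⁻¹ *
        (Real.exp (-(u - m)^2/(2*p)) * Real.exp (-(y - a*u)^2/(2*r))) := by ring
    _ = _ := by rw [e1, e2]; ring

set_option maxHeartbeats 1000000 in
lemma key {p r : ℝ} (hp : 0 < p) (hr : 0 < r) (a m : ℝ) :
    ((gaussianReal m p.toNNReal).prod (gaussianReal 0 r.toNNReal)).map
        (fun z : ℝ × ℝ => (a * z.1 + z.2, z.1))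
      = (gaussianReal (a * m) (a^2*p+r).toNNReal) ⊗ₘ
          gKer (m - (p*a/(a^2*p+r))*(a*m)) (p*a/(a^2*p+r)) (p*r/(a^2*p+r)).toNNReal := by
  have hS : 0 < a^2*p+r := by positivity
  have hw : 0 < p*r/(a^2*p+r) := by positivity
  have hp' : p.toNNReal ≠ 0 := (Real.toNNReal_pos.mpr hp).ne'
  have hr' : r.toNNReal ≠ 0 := (Real.toNNReal_pos.mpr hr).ne'
  have hS' : (a^2*p+r).toNNReal ≠ 0 := (Real.toNNReal_pos.mpr hS).ne'
  have hw' : (p*r/(a^2*p+r)).toNNReal ≠ 0 := (Real.toNNReal_pos.mpr hw).ne'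
  have hT : Measurable (fun z : ℝ × ℝ => (a * z.1 + z.2, z.1)) := by fun_prop
  ext s hs
  have hind : Measurable (s.indicator (1 : ℝ × ℝ → ℝ≥0∞)) := measurable_const.indicator hs
  rw [Measure.map_apply hT hs, Measure.compProd_apply hs, Measure.prod_apply (hT hs)]
  -- rewrite inner slices of the left side
  have slice2 : ∀ x : ℝ, (gaussianReal 0 r.toNNReal) (Prod.mk x ⁻¹' ((fun z : ℝ×ℝ => (a*z.1+z.2, z.1)) ⁻¹' s))
      = ∫⁻ e, gaussianPDF 0 r.toNNReal e * s.indicator 1 (a*x+e, x) ∂volume := by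
    intro x
    have ht : MeasurableSet {e : ℝ | (a*x+e, x) ∈ s} := by
      have : Measurable fun e : ℝ => (a*x+e, x) := by fun_prop
      exact this hs
    have : (Prod.mk x ⁻¹' ((fun z : ℝ×ℝ => (a*z.1+z.2, z.1)) ⁻¹' s)) = {e : ℝ | (a*x+e, x) ∈ s} := rfl
    rw [this, gaussianReal_apply 0 hr', ← lintegral_indicator ht]
    congr 1
    ext e
    by_cases h : (a*x+e, x) ∈ s <;>
      simp [Set.indicator_apply, h]
  rw [lintegral_congr slice2]
  have hinner : Measurable (fun z : ℝ×ℝ => gaussianPDF 0 r.toNNReal z.2 * s.indicator 1 (a*z.1+z.2, z.1)) :=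
    ((measurable_gaussianPDF 0 r.toNNReal).comp measurable_snd).mul (hind.comp (by fun_prop))
  rw [lintegral_gaussianReal hp' m hinner.lintegral_prod_right']
  -- substitution in the inner integral
  have pdfshift : ∀ (c t : ℝ), gaussianPDFReal c r.toNNReal (c + t) = gaussianPDFReal 0 r.toNNReal t := by
    intro c t
    simp only [gaussianPDFReal]
    ring_nf
  have sub1 : ∀ x : ℝ,
      ∫⁻ e, gaussianPDF 0 r.toNNReal e * s.indicator 1 (a*x+e, x)
        = ∫⁻ y, gaussianPDF (a*x) r.toNNReal y * s.indicator 1 (y, x) := by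
    intro x
    rw [← (measurePreserving_add_left volume (a*x)).lintegral_comp
      (f := fun y => gaussianPDF (a*x) r.toNNReal y * s.indicator 1 (y, x))
      ((measurable_gaussianPDF _ _).mul (hind.comp (by fun_prop)))]
    refine lintegral_congr fun e => ?_
    congr 1
    simp only [gaussianPDF, pdfshift]
  -- factorization
  have fact : ∀ (y x : ℝ),
      gaussianPDF m p.toNNReal x * (gaussianPDF (a*x) r.toNNReal y * s.indicator 1 (y, x))
        = gaussianPDF (a*m) (a^2*p+r).toNNReal y *
          (gaussianPDF ((m - (p*a/(a^2*p+r))*(a*m)) + (p*a/(a^2*p+r)) * y)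
            (p*r/(a^2*p+r)).toNNReal x * s.indicator 1 (y, x)) := by
    intro y x
    rw [← mul_assoc, ← mul_assoc]
    congr 1
    rw [gaussianPDF, gaussianPDF, ← ENNReal.ofReal_mul (gaussianPDFReal_nonneg _ _ _),
      gauss_factor hp hr a m x y, show m + (p*a/(a^2*p+r))*(y - a*m)
        = (m - (p*a/(a^2*p+r))*(a*m)) + (p*a/(a^2*p+r)) * y by ring,
      ENNReal.ofReal_mul (gaussianPDFReal_nonneg _ _ _)]
    rfl
  calc ∫⁻ x, gaussianPDF m p.toNNReal x *
        ∫⁻ e, gaussianPDF 0 r.toNNReal e * s.indicator 1 (a*x+e, x)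
      = ∫⁻ x, ∫⁻ y, gaussianPDF m p.toNNReal x *
          (gaussianPDF (a*x) r.toNNReal y * s.indicator 1 (y, x)) := by
        refine lintegral_congr fun x => ?_
        have hmeas : Measurable fun y : ℝ => gaussianPDF (a*x) r.toNNReal y * s.indicator 1 (y, x) :=
          (measurable_gaussianPDF _ _).mul (hind.comp (by fun_prop))
        rw [sub1 x, ← lintegral_const_mul _ hmeas]
    _ = ∫⁻ y, ∫⁻ x, gaussianPDF m p.toNNReal x *
          (gaussianPDF (a*x) r.toNNReal y * s.indicator 1 (y, x)) := by
        refine lintegral_lintegral_swap ?_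
        refine Measurable.aemeasurable ?_
        have h1 : Measurable fun z : ℝ × ℝ => gaussianPDF m p.toNNReal z.1 :=
          (measurable_gaussianPDF _ _).comp measurable_fst
        have h2 : Measurable fun z : ℝ × ℝ => gaussianPDF (a*z.1) r.toNNReal z.2 :=
          measurable_gaussianPDF' (by fun_prop) (by fun_prop) _
        exact h1.mul (h2.mul (hind.comp (by fun_prop)))
    _ = ∫⁻ y, gaussianPDF (a*m) (a^2*p+r).toNNReal y *
          ∫⁻ x, gaussianPDF ((m - (p*a/(a^2*p+r))*(a*m)) + (p*a/(a^2*p+r)) * y)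
            (p*r/(a^2*p+r)).toNNReal x * s.indicator 1 (y, x) := by
        refine lintegral_congr fun y => ?_
        have hmeas : Measurable fun x : ℝ =>
            gaussianPDF ((m - (p*a/(a^2*p+r))*(a*m)) + (p*a/(a^2*p+r)) * y)
              (p*r/(a^2*p+r)).toNNReal x * s.indicator 1 (y, x) :=
          (measurable_gaussianPDF _ _).mul (hind.comp (by fun_prop))
        rw [← lintegral_const_mul _ hmeas]
        exact lintegral_congr fun x => fact y x
    _ = ∫⁻ y, (gKer (m - (p*a/(a^2*p+r))*(a*m)) (p*a/(a^2*p+r)) (p*r/(a^2*p+r)).toNNReal y)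
          (Prod.mk y ⁻¹' s) ∂(gaussianReal (a*m) (a^2*p+r).toNNReal) := by
        rw [lintegral_gaussianReal hS' (a*m)
          (Kernel.measurable_kernel_prodMk_left hs)]
        refine lintegral_congr fun y => ?_
        congr 1
        have hty : MeasurableSet {x : ℝ | (y, x) ∈ s} := (measurable_prodMk_left hs)
        rw [gKer_apply, gaussianReal_apply _ hw',
          show (Prod.mk y ⁻¹' s) = {x : ℝ | (y, x) ∈ s} from rfl,
          ← lintegral_indicator hty]
        refine lintegral_congr fun x => ?_
        by_cases h : (y, x) ∈ s <;> simp [Set.indicator_apply, h]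

lemma ae_eq_const_of_map_gauss0 {Ω : Type*} [MeasurableSpace Ω] {μ : Measure Ω} {X : Ω → ℝ}
    (hX : Measurable X) {c : ℝ} (h : μ.map X = gaussianReal c 0) : ∀ᵐ ω ∂μ, X ω = c := by
  have h' : μ.map X = Measure.dirac c := by rwa [gaussianReal_zero_var] at h
  have h0 : μ.map X {c}ᶜ = 0 := by
    rw [h', Measure.dirac_apply' _ (measurableSet_singleton c).compl]
    simp
  rw [Measure.map_apply hX (measurableSet_singleton c).compl] at h0
  refine ae_iff.mpr ?_
  convert h0 using 2
  rfl



open MeasureTheory ProbabilityTheory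

/-- Bayesian update of the Kalman filter with predictable jumps: if `X ~ N(m,p)`,
`ξ ~ N(0,q)` and `η ~ N(0,r)` are independent, `X̂ = X + ξ`, `Y = a X̂ + η`, `p̂ = p + q`,
`S = a² p̂ + r` and `K = p̂ a / S`, then the conditional distribution of `X̂` given `Y = y` is
`N(m + K(y − a m), p̂ − K a p̂)` for `(law of Y)`-a.e. `y`. -/
theorem stmt9 {Ω : Type*} [MeasurableSpace Ω] (μ : Measure Ω) [IsProbabilityMeasure μ]
    (X ξ η : Ω → ℝ) (hX : Measurable X) (hξ : Measurable ξ) (hη : Measurable η)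
    (m p q r : ℝ) (hp : 0 ≤ p) (hq : 0 ≤ q) (hr : 0 < r) (a : ℝ)
    (hlawX : μ.map X = gaussianReal m p.toNNReal)
    (hlawξ : μ.map ξ = gaussianReal 0 q.toNNReal)
    (hlawη : μ.map η = gaussianReal 0 r.toNNReal)
    (hindep : iIndepFun ![X, ξ, η] μ) :
    ∀ᵐ y ∂(μ.map (fun ω => a * (X ω + ξ ω) + η ω)),
      condDistrib (fun ω => X ω + ξ ω) (fun ω => a * (X ω + ξ ω) + η ω) μ y
        = gaussianReal
            (m + ((p + q) * a / (a ^ 2 * (p + q) + r)) * (y - a * m))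
            ((p + q) - ((p + q) * a / (a ^ 2 * (p + q) + r)) * a * (p + q)).toNNReal := by
  have hmeas : ∀ i, Measurable (![X, ξ, η] i) := by
    intro i
    fin_cases i <;> assumption
  have hYm : Measurable (fun ω => a * (X ω + ξ ω) + η ω) := by fun_prop
  have hXhatm : Measurable (fun ω => X ω + ξ ω) := hX.add hξ
  -- independence of X̂ and η
  have hindXξη : IndepFun (fun ω => (X ω, ξ ω)) η μ := by
    have := hindep.indepFun_prodMk hmeas 0 1 2 (by decide) (by decide)
    simpa using this
  have hind2 : IndepFun (fun ω => X ω + ξ ω) η μ :=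
    hindXξη.comp (measurable_fst.add measurable_snd) measurable_id
  rcases eq_or_lt_of_le (by positivity : (0:ℝ) ≤ p + q) with hpq | hpq
  · -- degenerate case: p = q = 0
    have hp0 : p = 0 := by linarith
    have hq0 : q = 0 := by linarith
    subst hp0; subst hq0
    have hXc : ∀ᵐ ω ∂μ, X ω = m :=
      ae_eq_const_of_map_gauss0 hX (by simpa using hlawX)
    have hξc : ∀ᵐ ω ∂μ, ξ ω = 0 :=
      ae_eq_const_of_map_gauss0 hξ (by simpa using hlawξ)
    have hjoint : μ.map (fun ω => (a * (X ω + ξ ω) + η ω, X ω + ξ ω))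
        = μ.map (fun ω => a * (X ω + ξ ω) + η ω) ⊗ₘ Kernel.const ℝ (gaussianReal m 0) := by
      rw [Measure.compProd_const, gaussianReal_zero_var, Measure.prod_dirac]
      rw [Measure.map_map (by fun_prop) hYm]
      refine Measure.map_congr ?_
      filter_upwards [hXc, hξc] with ω h1 h2
      simp [h1, h2]
    have hcd := condDistrib_ae_eq_of_measure_eq_compProd _ hXhatm.aemeasurable
      (κ := Kernel.const ℝ (gaussianReal m 0)) hjoint
    filter_upwards [hcd] with y hy
    rw [hy, Kernel.const_apply]
    norm_num
  · -- main case
    have hXξind : IndepFun X ξ μ := by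
      have := hindep.indepFun (i := 0) (j := 1) (by decide)
      simpa using this
    have hXhat : μ.map (fun ω => X ω + ξ ω) = gaussianReal m (p + q).toNNReal := by
      rcases eq_or_lt_of_le hp with hp0 | hp0
      · -- p = 0
        have hXc : ∀ᵐ ω ∂μ, X ω = m :=
          ae_eq_const_of_map_gauss0 hX (by rw [hlawX, ← hp0]; simp)
        have : μ.map (fun ω => X ω + ξ ω) = μ.map (fun ω => m + ξ ω) := by
          refine Measure.map_congr ?_
          filter_upwards [hXc] with ω h1
          simp [h1]
        rw [this, show (fun ω => m + ξ ω) = (fun x => m + x) ∘ ξ from rfl,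
          ← Measure.map_map (by fun_prop) hξ, hlawξ, gaussianReal_map_const_add m, ← hp0]
        norm_num
      rcases eq_or_lt_of_le hq with hq0 | hq0
      · -- q = 0
        have hξc : ∀ᵐ ω ∂μ, ξ ω = 0 :=
          ae_eq_const_of_map_gauss0 hξ (by rw [hlawξ, ← hq0]; simp)
        have : μ.map (fun ω => X ω + ξ ω) = μ.map X := by
          refine Measure.map_congr ?_
          filter_upwards [hξc] with ω h1
          simp [h1]
        rw [this, hlawX, ← hq0]
        norm_num
      · -- p, q > 0
        have hpairXξ : μ.map (fun ω => (X ω, ξ ω))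
            = (gaussianReal m p.toNNReal).prod (gaussianReal 0 q.toNNReal) := by
          rw [← hlawX, ← hlawξ]
          exact (indepFun_iff_map_prod_eq_prod_map_map hX.aemeasurable hξ.aemeasurable).mp hXξind
        have hmm : μ.map (fun ω => X ω + ξ ω)
            = (((gaussianReal m p.toNNReal).prod (gaussianReal 0 q.toNNReal)).map
                (fun z : ℝ × ℝ => (1 * z.1 + z.2, z.1))).fst := by
          rw [← hpairXξ, Measure.fst, Measure.map_map measurable_fst (by fun_prop),
            Measure.map_map (by fun_prop) (hX.prodMk hξ)]
          congr 1
          funext ω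
          simp
        rw [hmm, key hp0 hq0 1 m, Measure.fst_compProd]
        norm_num
    have hpair : μ.map (fun ω => (X ω + ξ ω, η ω))
        = (gaussianReal m (p + q).toNNReal).prod (gaussianReal 0 r.toNNReal) := by
      rw [← hXhat, ← hlawη]
      exact (indepFun_iff_map_prod_eq_prod_map_map hXhatm.aemeasurable hη.aemeasurable).mp hind2
    have hjoint : μ.map (fun ω => (a * (X ω + ξ ω) + η ω, X ω + ξ ω))
        = (gaussianReal (a * m) (a^2*(p+q)+r).toNNReal) ⊗ₘ
            gKer (m - ((p+q)*a/(a^2*(p+q)+r))*(a*m)) ((p+q)*a/(a^2*(p+q)+r))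
              ((p+q)*r/(a^2*(p+q)+r)).toNNReal := by
      rw [← key hpq hr a m, ← hpair,
        Measure.map_map (by fun_prop) (hXhatm.prodMk hη)]
      rfl
    have hY : μ.map (fun ω => a * (X ω + ξ ω) + η ω)
        = gaussianReal (a * m) (a^2*(p+q)+r).toNNReal := by
      rw [← Measure.fst_map_prodMk (hXhatm : Measurable fun ω => X ω + ξ ω), hjoint,
        Measure.fst_compProd]
    have hcd := condDistrib_ae_eq_of_measure_eq_compProd _ hXhatm.aemeasurable
      (κ := gKer (m - ((p+q)*a/(a^2*(p+q)+r))*(a*m)) ((p+q)*a/(a^2*(p+q)+r))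
        ((p+q)*r/(a^2*(p+q)+r)).toNNReal) (by rw [hjoint, hY])
    filter_upwards [hcd] with y hy
    rw [hy, gKer_apply]
    have hS : 0 < a^2*(p+q)+r := by positivity
    congr 1
    · ring
    · rw [show ((p + q) - ((p + q) * a / (a ^ 2 * (p + q) + r)) * a * (p + q))
        = (p+q)*r/(a^2*(p+q)+r) by field_simp; ring]
end

section
/- Let X, ξ, η be independent real random variables with laws gaussianReal m P, gaussianReal 0 Q and gaussianReal 0 R respectively, where m ∈ ℝ, P, Q ≥ 0, R > 0, and let a ∈ ℝ. Set X̂ := X + ξ, Y := a·X̂ + η, P̂ := P + Q, S := a²·P̂ + R and K := P̂·a / S. Then the conditional expectation of X̂ given the σ-algebra generated by Y satisfies E[X̂ | σ(Y)] = m + K·(Y − a·m) almost surely. -/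
open MeasureTheory ProbabilityTheory Real
open scoped NNReal ENNReal

namespace KalmanAux


lemma factF {v₁ v₂ : ℝ} (h₁ : 0 < v₁) (h₂ : 0 < v₂) (a m x t : ℝ) :
    gaussianPDFReal m v₁.toNNReal x * gaussianPDFReal 0 v₂.toNNReal (t - a * x)
      = gaussianPDFReal (a * m) (a ^ 2 * v₁ + v₂).toNNReal t *
        gaussianPDFReal (m + v₁ * a / (a ^ 2 * v₁ + v₂) * (t - a * m))
          ((v₁ * v₂ / (a ^ 2 * v₁ + v₂)).toNNReal) x := by
  have hS : 0 < a ^ 2 * v₁ + v₂ := by positivity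
  have hw : 0 < v₁ * v₂ / (a ^ 2 * v₁ + v₂) := by positivity
  simp only [gaussianPDFReal, Real.coe_toNNReal _ h₁.le, Real.coe_toNNReal _ h₂.le,
    Real.coe_toNNReal _ hS.le, Real.coe_toNNReal _ hw.le]
  rw [mul_mul_mul_comm, mul_mul_mul_comm ((√(2 * π * (a ^ 2 * v₁ + v₂)))⁻¹)]
  congr 1
  · rw [← mul_inv, ← mul_inv, ← Real.sqrt_mul (by positivity), ← Real.sqrt_mul (by positivity)]
    congr 2
    field_simp
  · rw [← Real.exp_add, ← Real.exp_add]
    congr 1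
    field_simp
    ring

lemma gaussianPDFReal_shift (μ : ℝ) (v : ℝ≥0) (x : ℝ) :
    gaussianPDFReal μ v x = gaussianPDFReal 0 v (x - μ) := by
  simp [gaussianPDFReal]

lemma integrable_sub_mul_gaussianPDFReal (c : ℝ) {v : ℝ} (hv : 0 < v) :
    Integrable (fun x => (x - c) * gaussianPDFReal c v.toNNReal x) := by
  have hb : 0 < (2 * v)⁻¹ := by positivity
  have h0 : Integrable (fun u => u * Real.exp (-(2 * v)⁻¹ * u ^ 2)) :=
    integrable_mul_exp_neg_mul_sq hb
  have h1 : Integrable (fun u => u * gaussianPDFReal 0 v.toNNReal u) := by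
    have := h0.const_mul ((√(2 * π * v))⁻¹)
    refine this.congr ?_
    filter_upwards with u
    simp only [gaussianPDFReal, Real.coe_toNNReal _ hv.le, sub_zero]
    ring_nf
  have h2 := h1.comp_sub_right c
  refine h2.congr ?_
  filter_upwards with x
  simp only [gaussianPDFReal_shift c]

lemma integral_sub_mul_gaussianPDFReal (c : ℝ) (v : ℝ) :
    ∫ x, (x - c) * gaussianPDFReal c v.toNNReal x = 0 := by
  have hodd : ∀ u : ℝ, (-u) * gaussianPDFReal 0 v.toNNReal (-u)
      = -(u * gaussianPDFReal 0 v.toNNReal u) := by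
    intro u
    simp only [gaussianPDFReal, sub_zero, neg_sq]
    ring
  have h1 : ∫ u, u * gaussianPDFReal 0 v.toNNReal u = 0 := by
    have h := integral_neg_eq_self (fun u => u * gaussianPDFReal 0 v.toNNReal u) volume
    simp only [hodd, integral_neg] at h
    linarith
  calc ∫ x, (x - c) * gaussianPDFReal c v.toNNReal x
      = ∫ x, (x - c) * gaussianPDFReal 0 v.toNNReal (x - c) := by
        congr 1; funext x; rw [gaussianPDFReal_shift]
    _ = ∫ u, u * gaussianPDFReal 0 v.toNNReal u := by
        exact integral_sub_right_eq_self (fun u => u * gaussianPDFReal 0 v.toNNReal u) c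
    _ = 0 := h1

lemma integral_norm_sub_mul_gaussianPDFReal (c : ℝ) (v : ℝ≥0) :
    ∫ x, ‖(x - c) * gaussianPDFReal c v x‖ = ∫ x, ‖x * gaussianPDFReal 0 v x‖ := by
  calc ∫ x, ‖(x - c) * gaussianPDFReal c v x‖
      = ∫ x, ‖(x - c) * gaussianPDFReal 0 v (x - c)‖ := by
        congr 1; funext x; rw [gaussianPDFReal_shift]
    _ = ∫ u, ‖u * gaussianPDFReal 0 v u‖ :=
        integral_sub_right_eq_self (fun u => ‖u * gaussianPDFReal 0 v u‖) c

lemma meas_pdf_toNNReal (m : ℝ) (v : ℝ≥0) :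
    Measurable fun x => (gaussianPDFReal m v x).toNNReal :=
  (measurable_gaussianPDFReal m v).real_toNNReal

lemma integral_gaussianReal_eq {v : ℝ≥0} (hv : v ≠ 0) (m : ℝ) (f : ℝ → ℝ) :
    ∫ x, f x ∂(gaussianReal m v) = ∫ x, gaussianPDFReal m v x * f x := by
  rw [gaussianReal_of_var_ne_zero m hv]
  have : gaussianPDF m v = fun x => ((gaussianPDFReal m v x).toNNReal : ℝ≥0∞) := rfl
  rw [this, integral_withDensity_eq_integral_smul (meas_pdf_toNNReal m v)]
  congr 1
  funext x
  rw [NNReal.smul_def, smul_eq_mul, Real.coe_toNNReal _ (gaussianPDFReal_nonneg m v x)]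

lemma integrable_id_gaussianReal (m : ℝ) (v : ℝ≥0) :
    Integrable (fun x => x) (gaussianReal m v) := by
  by_cases hv : v = 0
  · simp only [hv, gaussianReal_zero_var]
    refine ⟨measurable_id.aestronglyMeasurable, ?_⟩
    simp only [HasFiniteIntegral, lintegral_dirac]
    exact ENNReal.coe_lt_top
  · rw [gaussianReal_of_var_ne_zero m hv]
    have : gaussianPDF m v = fun x => ((gaussianPDFReal m v x).toNNReal : ℝ≥0∞) := rfl
    rw [this, integrable_withDensity_iff (meas_pdf_toNNReal m v).coe_nnreal_ennreal (by simp)]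
    have hv' : 0 < (v : ℝ) := NNReal.coe_pos.mpr (pos_iff_ne_zero.mpr hv)
    have h := integrable_sub_mul_gaussianPDFReal m hv'
    rw [Real.toNNReal_coe] at h
    have h2 : Integrable (fun x => m * gaussianPDFReal m v x) :=
      (integrable_gaussianPDFReal m v).const_mul m
    have := h.add h2
    refine this.congr ?_
    filter_upwards with x
    simp only [ENNReal.coe_toReal, Real.coe_toNNReal _ (gaussianPDFReal_nonneg m v x)]
    simp only [Pi.add_apply]
    ring

section Main

variable {v₁ v₂ : ℝ}

lemma main_integral (h₁ : 0 < v₁) (h₂ : 0 < v₂) (a m : ℝ) {B : Set ℝ} (hB : MeasurableSet B) :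
    ∫ p in {p : ℝ × ℝ | a * p.1 + p.2 ∈ B},
        (p.1 - (m + v₁ * a / (a ^ 2 * v₁ + v₂) * ((a * p.1 + p.2) - a * m)))
      ∂((gaussianReal m v₁.toNNReal).prod (gaussianReal 0 v₂.toNNReal)) = 0 := by
  have hS : 0 < a ^ 2 * v₁ + v₂ := by positivity
  set S : ℝ := a ^ 2 * v₁ + v₂ with hSdef
  set K : ℝ := v₁ * a / S with hKdef
  have hw : 0 < v₁ * v₂ / S := by positivity
  set w : ℝ := v₁ * v₂ / S with hwdef
  set μt : ℝ → ℝ := fun t => m + K * (t - a * m) with hμtdef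
  set N₁ : Measure ℝ := gaussianReal m v₁.toNNReal with hN₁
  set N₂ : Measure ℝ := gaussianReal 0 v₂.toNNReal with hN₂
  have hv₁' : v₁.toNNReal ≠ 0 := by simp [Real.toNNReal_eq_zero, not_le, h₁]
  have hv₂' : v₂.toNNReal ≠ 0 := by simp [Real.toNNReal_eq_zero, not_le, h₂]
  set f : ℝ × ℝ → ℝ := fun p => p.1 - (m + K * ((a * p.1 + p.2) - a * m)) with hfdef
  have hs' : MeasurableSet {p : ℝ × ℝ | a * p.1 + p.2 ∈ B} :=
    ((measurable_fst.const_mul a).add measurable_snd) hB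
  -- integrability of f with respect to the product measure
  have hmap1 : (N₁.prod N₂).map Prod.fst = N₁ := by
    rw [Measure.map_fst_prod]; simp
  have hmap2 : (N₁.prod N₂).map Prod.snd = N₂ := by
    rw [Measure.map_snd_prod]; simp
  have hfst : Integrable (fun p : ℝ × ℝ => p.1) (N₁.prod N₂) := by
    have h := (integrable_map_measure (f := (Prod.fst : ℝ × ℝ → ℝ)) (g := fun x : ℝ => x)
      measurable_id.aestronglyMeasurable measurable_fst.aemeasurable (μ := N₁.prod N₂)).mp
    rw [hmap1] at h
    exact h (integrable_id_gaussianReal _ _)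
  have hsnd : Integrable (fun p : ℝ × ℝ => p.2) (N₁.prod N₂) := by
    have h := (integrable_map_measure (f := (Prod.snd : ℝ × ℝ → ℝ)) (g := fun x : ℝ => x)
      measurable_id.aestronglyMeasurable measurable_snd.aemeasurable (μ := N₁.prod N₂)).mp
    rw [hmap2] at h
    exact h (integrable_id_gaussianReal _ _)
  have hfint : Integrable f (N₁.prod N₂) := by
    have hfeq : f = fun p : ℝ × ℝ =>
        (1 - K * a) * p.1 + ((-K) * p.2 + (K * (a * m) - m)) := by
      funext p; simp only [hfdef]; ring
    rw [hfeq]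
    exact (hfst.const_mul _).add ((hsnd.const_mul _).add (integrable_const _))
  -- the two-variable density function after the change of variables
  set F : ℝ → ℝ → ℝ := fun x t => B.indicator 1 t * (gaussianPDFReal (a * m) S.toNNReal t *
    ((x - μt t) * gaussianPDFReal (μt t) w.toNNReal x)) with hFdef
  have hFmeas : Measurable (fun z : ℝ × ℝ => F z.1 z.2) := by
    apply Measurable.mul
    · exact ((measurable_one (α := ℝ)).indicator hB).comp measurable_snd
    · apply Measurable.mul
      · exact (measurable_gaussianPDFReal _ _).comp measurable_snd
      · have hμtm : Measurable (fun z : ℝ × ℝ => μt z.2) := by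
          simp only [hμtdef]; fun_prop
        apply Measurable.mul
        · exact measurable_fst.sub hμtm
        · have : (fun z : ℝ × ℝ => gaussianPDFReal (μt z.2) w.toNNReal z.1)
              = fun z => (√(2 * π * w.toNNReal))⁻¹ *
                rexp (-(z.1 - μt z.2) ^ 2 / (2 * w.toNNReal)) := rfl
          rw [this]
          apply Measurable.mul measurable_const
          apply Real.measurable_exp.comp
          fun_prop
  -- integrability of F over volume × volume
  have hCw : (0:ℝ) ≤ ∫ x, ‖x * gaussianPDFReal 0 w.toNNReal x‖ :=
    integral_nonneg fun x => norm_nonneg _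
  set Cw : ℝ := ∫ x, ‖x * gaussianPDFReal 0 w.toNNReal x‖ with hCwdef
  have hslice : ∀ t : ℝ, Integrable (fun x => F x t) volume := by
    intro t
    have h := (integrable_sub_mul_gaussianPDFReal (μt t) hw).const_mul
      (B.indicator 1 t * gaussianPDFReal (a * m) S.toNNReal t)
    refine h.congr (Filter.Eventually.of_forall fun x => ?_)
    simp only [hFdef]; ring
  have hnormval : ∀ t : ℝ, (∫ x, ‖F x t‖)
      = B.indicator 1 t * gaussianPDFReal (a * m) S.toNNReal t * Cw := by
    intro t
    have hind : (0:ℝ) ≤ B.indicator 1 t := Set.indicator_nonneg (fun _ _ => zero_le_one) t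
    calc (∫ x, ‖F x t‖)
        = ∫ x, (B.indicator 1 t * gaussianPDFReal (a * m) S.toNNReal t) *
            ‖(x - μt t) * gaussianPDFReal (μt t) w.toNNReal x‖ := by
          congr 1; funext x
          simp only [hFdef, norm_mul, Real.norm_eq_abs, abs_of_nonneg hind,
            abs_of_nonneg (gaussianPDFReal_nonneg _ _ _)]
          ring
      _ = (B.indicator 1 t * gaussianPDFReal (a * m) S.toNNReal t) *
            ∫ x, ‖(x - μt t) * gaussianPDFReal (μt t) w.toNNReal x‖ := integral_const_mul _ _
      _ = B.indicator 1 t * gaussianPDFReal (a * m) S.toNNReal t * Cw := by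
          rw [integral_norm_sub_mul_gaussianPDFReal]
  have hint2 : Integrable (fun z : ℝ × ℝ => F z.1 z.2) (volume.prod volume) := by
    rw [integrable_prod_iff' hFmeas.aestronglyMeasurable]
    constructor
    · exact Filter.Eventually.of_forall fun t => hslice t
    · have heq : (fun t => ∫ x, ‖F x t‖)
          = fun t => B.indicator 1 t * gaussianPDFReal (a * m) S.toNNReal t * Cw :=
        funext hnormval
      rw [heq]
      refine Integrable.mono' ((integrable_gaussianPDFReal (a * m) S.toNNReal).mul_const Cw)
        ?_ ?_
      · exact ((((measurable_one (α := ℝ)).indicator hB).mul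
          (measurable_gaussianPDFReal _ _)).mul_const Cw).aestronglyMeasurable
      · refine Filter.Eventually.of_forall fun t => ?_
        have hind : (0:ℝ) ≤ B.indicator 1 t := Set.indicator_nonneg (fun _ _ => zero_le_one) t
        have hind1 : B.indicator 1 t ≤ (1:ℝ) := by
          by_cases ht : t ∈ B <;> simp [ht]
        have hpdf : (0:ℝ) ≤ gaussianPDFReal (a * m) S.toNNReal t :=
          gaussianPDFReal_nonneg _ _ _
        rw [Real.norm_eq_abs, abs_of_nonneg (mul_nonneg (mul_nonneg hind hpdf) hCw)]
        exact mul_le_mul_of_nonneg_right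
          (by simpa using mul_le_of_le_one_left hpdf hind1) hCw
  -- inner integral: change of variables in the second coordinate
  have hinner : ∀ x : ℝ, (∫ y, Set.indicator {p : ℝ × ℝ | a * p.1 + p.2 ∈ B} f (x, y) ∂N₂)
      = ∫ t, gaussianPDFReal 0 v₂.toNNReal (t - a * x) * (B.indicator 1 t * (x - μt t)) := by
    intro x
    rw [hN₂, integral_gaussianReal_eq hv₂' 0]
    have hpt : ∀ y : ℝ, gaussianPDFReal 0 v₂.toNNReal y *
        Set.indicator {p : ℝ × ℝ | a * p.1 + p.2 ∈ B} f (x, y)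
        = (fun t => gaussianPDFReal 0 v₂.toNNReal (t - a * x) *
            (B.indicator 1 t * (x - μt t))) (a * x + y) := by
      intro y
      by_cases hy : a * x + y ∈ B
      · have hxy : (x, y) ∈ {p : ℝ × ℝ | a * p.1 + p.2 ∈ B} := hy
        rw [Set.indicator_of_mem hxy]
        simp only [hfdef, hμtdef, Set.indicator_of_mem hy, Pi.one_apply, add_sub_cancel_left]
        ring
      · have hxy : (x, y) ∉ {p : ℝ × ℝ | a * p.1 + p.2 ∈ B} := hy
        rw [Set.indicator_of_notMem hxy]
        simp [Set.indicator_of_notMem hy]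
    simp_rw [hpt]
    exact integral_add_left_eq_self
      (fun t => gaussianPDFReal 0 v₂.toNNReal (t - a * x) *
        (B.indicator 1 t * (x - μt t))) (a * x)
  have hFrw : ∀ x t : ℝ, gaussianPDFReal m v₁.toNNReal x *
      (gaussianPDFReal 0 v₂.toNNReal (t - a * x) * (B.indicator 1 t * (x - μt t)))
      = F x t := by
    intro x t
    have hf := factF h₁ h₂ a m x t
    simp only [hFdef, hμtdef, hKdef, hwdef, hSdef]
    linear_combination (B.indicator 1 t *
      (x - (m + v₁ * a / (a ^ 2 * v₁ + v₂) * (t - a * m)))) * hf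
  have hzero : ∀ t : ℝ, (∫ x, F x t) = 0 := by
    intro t
    simp only [hFdef]
    rw [integral_const_mul, integral_const_mul, integral_sub_mul_gaussianPDFReal (μt t) w,
      mul_zero, mul_zero]
  calc ∫ p in {p : ℝ × ℝ | a * p.1 + p.2 ∈ B}, f p ∂(N₁.prod N₂)
      = ∫ p, Set.indicator {p : ℝ × ℝ | a * p.1 + p.2 ∈ B} f p ∂(N₁.prod N₂) :=
        (integral_indicator hs').symm
    _ = ∫ x, ∫ y, Set.indicator {p : ℝ × ℝ | a * p.1 + p.2 ∈ B} f (x, y) ∂N₂ ∂N₁ :=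
        integral_prod _ (hfint.indicator hs')
    _ = ∫ x, gaussianPDFReal m v₁.toNNReal x *
          ∫ t, gaussianPDFReal 0 v₂.toNNReal (t - a * x) *
            (B.indicator 1 t * (x - μt t)) := by
        simp_rw [hinner]
        rw [hN₁, integral_gaussianReal_eq hv₁' m]
    _ = ∫ x, ∫ t, F x t := by
        simp_rw [← integral_const_mul, hFrw]
    _ = ∫ t, ∫ x, F x t := integral_integral_swap hint2
    _ = 0 := by simp_rw [hzero, integral_zero]

end Main


lemma integrable_fst_of_prob {μ ν : Measure ℝ} [IsProbabilityMeasure μ] [IsProbabilityMeasure ν]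
    (h : Integrable (fun x : ℝ => x) μ) : Integrable (fun p : ℝ × ℝ => p.1) (μ.prod ν) := by
  have hmap : (μ.prod ν).map Prod.fst = μ := by rw [Measure.map_fst_prod]; simp
  have h2 := (integrable_map_measure (f := (Prod.fst : ℝ × ℝ → ℝ)) (g := fun x : ℝ => x)
    measurable_id.aestronglyMeasurable measurable_fst.aemeasurable (μ := μ.prod ν)).mp
  rw [hmap] at h2
  exact h2 h

lemma integrable_snd_of_prob {μ ν : Measure ℝ} [IsProbabilityMeasure μ] [IsProbabilityMeasure ν]
    (h : Integrable (fun x : ℝ => x) ν) : Integrable (fun p : ℝ × ℝ => p.2) (μ.prod ν) := by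
  have hmap : (μ.prod ν).map Prod.snd = ν := by rw [Measure.map_snd_prod]; simp
  have h2 := (integrable_map_measure (f := (Prod.snd : ℝ × ℝ → ℝ)) (g := fun x : ℝ => x)
    measurable_id.aestronglyMeasurable measurable_snd.aemeasurable (μ := μ.prod ν)).mp
  rw [hmap] at h2
  exact h2 h


lemma ae_eq_const_of_map_eq_dirac {Ω : Type*} [MeasurableSpace Ω] {μ : Measure Ω}
    {X : Ω → ℝ} (hX : Measurable X) {c : ℝ} (h : μ.map X = Measure.dirac c) :
    X =ᵐ[μ] fun _ => c := by
  have h0 : μ (X ⁻¹' {c}ᶜ) = 0 := by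
    rw [← Measure.map_apply hX (measurableSet_singleton c).compl, h,
      Measure.dirac_apply' _ (measurableSet_singleton c).compl]
    simp
  refine (ae_iff).mpr ?_
  convert h0 using 2
  ext ω; simp

lemma map_add_gaussianReal {Ω : Type*} [MeasurableSpace Ω] (μ : Measure Ω)
    [IsProbabilityMeasure μ]
    {X W : Ω → ℝ} (hX : Measurable X) (hW : Measurable W)
    {v₁ v₂ : ℝ} (h₁ : 0 ≤ v₁) (h₂ : 0 ≤ v₂) (m : ℝ)
    (hlX : μ.map X = gaussianReal m v₁.toNNReal)
    (hlW : μ.map W = gaussianReal 0 v₂.toNNReal)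
    (hind : IndepFun X W μ) :
    μ.map (fun ω => X ω + W ω) = gaussianReal m (v₁ + v₂).toNNReal := by
  rcases eq_or_lt_of_le h₁ with hv₁ | hv₁
  · -- v₁ = 0
    rw [← hv₁, Real.toNNReal_zero, gaussianReal_zero_var] at hlX
    have hXc : X =ᵐ[μ] fun _ => m := ae_eq_const_of_map_eq_dirac hX hlX
    have hcongr : (fun ω => X ω + W ω) =ᵐ[μ] fun ω => m + W ω := by
      filter_upwards [hXc] with ω hω
      rw [hω]
    rw [Measure.map_congr hcongr,
      show (fun ω => m + W ω) = (fun x => m + x) ∘ W from rfl,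
      ← Measure.map_map (measurable_const_add m) hW, hlW, gaussianReal_map_const_add m]
    rw [← hv₁, zero_add, zero_add]
  rcases eq_or_lt_of_le h₂ with hv₂ | hv₂
  · -- v₂ = 0
    rw [← hv₂, Real.toNNReal_zero, gaussianReal_zero_var] at hlW
    have hWc : W =ᵐ[μ] fun _ => 0 := ae_eq_const_of_map_eq_dirac hW hlW
    have hcongr : (fun ω => X ω + W ω) =ᵐ[μ] X := by
      filter_upwards [hWc] with ω hω
      rw [hω, add_zero]
    rw [Measure.map_congr hcongr, hlX, ← hv₂, add_zero]
  -- both positive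
  have hv₁' : v₁.toNNReal ≠ 0 := by simp [Real.toNNReal_eq_zero, not_le, hv₁]
  have hv₂' : v₂.toNNReal ≠ 0 := by simp [Real.toNNReal_eq_zero, not_le, hv₂]
  have hS : (0:ℝ) < v₁ + v₂ := by linarith
  have hS' : (v₁ + v₂).toNNReal ≠ 0 := by simp [Real.toNNReal_eq_zero, not_le, hS]
  have hw : (0:ℝ) < v₁ * v₂ / (v₁ + v₂) := by positivity
  have hw' : (v₁ * v₂ / (v₁ + v₂)).toNNReal ≠ 0 := by simp [Real.toNNReal_eq_zero, not_le, hw]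
  have hjoint : μ.map (fun ω => (X ω, W ω))
      = (gaussianReal m v₁.toNNReal).prod (gaussianReal 0 v₂.toNNReal) := by
    rw [← hlX, ← hlW]
    exact (indepFun_iff_map_prod_eq_prod_map_map hX.aemeasurable hW.aemeasurable).mp hind
  ext B hB
  have hs' : MeasurableSet {p : ℝ × ℝ | p.1 + p.2 ∈ B} :=
    (measurable_fst.add measurable_snd) hB
  rw [Measure.map_apply (f := fun ω => X ω + W ω) (hX.add hW) hB,
    show (fun ω => X ω + W ω) ⁻¹' B = (fun ω => (X ω, W ω)) ⁻¹' {p : ℝ × ℝ | p.1 + p.2 ∈ B}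
      from rfl,
    ← Measure.map_apply (hX.prodMk hW) hs', hjoint, Measure.prod_apply hs']
  have hsec : ∀ x : ℝ, (gaussianReal 0 v₂.toNNReal) (Prod.mk x ⁻¹' {p : ℝ × ℝ | p.1 + p.2 ∈ B})
      = ∫⁻ t, ENNReal.ofReal (gaussianPDFReal 0 v₂.toNNReal (t - x)) *
          B.indicator (fun _ => (1:ℝ≥0∞)) t := by
    intro x
    have hA : MeasurableSet {y : ℝ | x + y ∈ B} := (measurable_const_add x) hB
    rw [show Prod.mk x ⁻¹' {p : ℝ × ℝ | p.1 + p.2 ∈ B} = {y : ℝ | x + y ∈ B} from rfl,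
      gaussianReal_apply 0 hv₂' _, ← lintegral_indicator hA]
    have hpt : ∀ y : ℝ, Set.indicator {y : ℝ | x + y ∈ B} (gaussianPDF 0 v₂.toNNReal) y
        = (fun t => ENNReal.ofReal (gaussianPDFReal 0 v₂.toNNReal (t - x)) *
            B.indicator (fun _ => (1:ℝ≥0∞)) t) (x + y) := by
      intro y
      by_cases hy : x + y ∈ B
      · rw [Set.indicator_of_mem (by exact hy)]
        simp only [Set.indicator_of_mem hy, gaussianPDF, add_sub_cancel_left, mul_one]
      · rw [Set.indicator_of_notMem (by exact hy)]
        simp [Set.indicator_of_notMem hy]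
    simp_rw [hpt]
    exact lintegral_add_left_eq_self
      (fun t => ENNReal.ofReal (gaussianPDFReal 0 v₂.toNNReal (t - x)) *
        B.indicator (fun _ => (1:ℝ≥0∞)) t) x
  have hInner : Measurable (fun z : ℝ × ℝ =>
      ENNReal.ofReal (gaussianPDFReal 0 v₂.toNNReal (z.2 - z.1)) *
        B.indicator (fun _ => (1:ℝ≥0∞)) z.2) :=
    (ENNReal.measurable_ofReal.comp ((measurable_gaussianPDFReal 0 v₂.toNNReal).comp
      (measurable_snd.sub measurable_fst))).mul
      ((measurable_const.indicator hB).comp measurable_snd)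
  simp_rw [hsec]
  rw [gaussianReal_of_var_ne_zero m hv₁',
    lintegral_withDensity_eq_lintegral_mul _ (measurable_gaussianPDF m v₁.toNNReal)
      hInner.lintegral_prod_right']
  have hconv : ∀ x t : ℝ, gaussianPDFReal m v₁.toNNReal x * gaussianPDFReal 0 v₂.toNNReal (t - x)
      = gaussianPDFReal m (v₁ + v₂).toNNReal t *
        gaussianPDFReal (m + v₁ / (v₁ + v₂) * (t - m)) ((v₁ * v₂ / (v₁ + v₂)).toNNReal) x := by
    intro x t
    have h := factF hv₁ hv₂ 1 m x t
    simpa using h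
  have hmeas2 : Measurable (fun z : ℝ × ℝ => gaussianPDF m v₁.toNNReal z.1 *
      (ENNReal.ofReal (gaussianPDFReal 0 v₂.toNNReal (z.2 - z.1)) *
        B.indicator (fun _ => (1:ℝ≥0∞)) z.2)) :=
    ((measurable_gaussianPDF m v₁.toNNReal).comp measurable_fst).mul
      ((ENNReal.measurable_ofReal.comp ((measurable_gaussianPDFReal 0 v₂.toNNReal).comp
        (measurable_snd.sub measurable_fst))).mul
        ((measurable_const.indicator hB).comp measurable_snd))
  calc ∫⁻ x, gaussianPDF m v₁.toNNReal x *
        ∫⁻ t, ENNReal.ofReal (gaussianPDFReal 0 v₂.toNNReal (t - x)) *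
          B.indicator (fun _ => (1:ℝ≥0∞)) t
      = ∫⁻ x, ∫⁻ t, gaussianPDF m v₁.toNNReal x *
          (ENNReal.ofReal (gaussianPDFReal 0 v₂.toNNReal (t - x)) *
            B.indicator (fun _ => (1:ℝ≥0∞)) t) := by
        congr 1
        funext x
        have hm1 : Measurable fun t : ℝ => ENNReal.ofReal (gaussianPDFReal 0 v₂.toNNReal (t - x)) *
            B.indicator (fun _ => (1:ℝ≥0∞)) t :=
          (ENNReal.measurable_ofReal.comp ((measurable_gaussianPDFReal 0 v₂.toNNReal).comp
            (measurable_id.sub measurable_const))).mul (measurable_const.indicator hB)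
        rw [lintegral_const_mul _ hm1]
    _ = ∫⁻ t, ∫⁻ x, gaussianPDF m v₁.toNNReal x *
          (ENNReal.ofReal (gaussianPDFReal 0 v₂.toNNReal (t - x)) *
            B.indicator (fun _ => (1:ℝ≥0∞)) t) := lintegral_lintegral_swap hmeas2.aemeasurable
    _ = ∫⁻ t, (ENNReal.ofReal (gaussianPDFReal m (v₁ + v₂).toNNReal t) *
          B.indicator (fun _ => (1:ℝ≥0∞)) t) *
          ∫⁻ x, ENNReal.ofReal
            (gaussianPDFReal (m + v₁ / (v₁ + v₂) * (t - m)) ((v₁ * v₂ / (v₁ + v₂)).toNNReal) x) := by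
        congr 1
        funext t
        have hm2 : Measurable fun x : ℝ => ENNReal.ofReal
            (gaussianPDFReal (m + v₁ / (v₁ + v₂) * (t - m)) ((v₁ * v₂ / (v₁ + v₂)).toNNReal) x) :=
          ENNReal.measurable_ofReal.comp (measurable_gaussianPDFReal _ _)
        rw [← lintegral_const_mul _ hm2]
        congr 1
        funext x
        rw [show gaussianPDF m v₁.toNNReal x = ENNReal.ofReal (gaussianPDFReal m v₁.toNNReal x)
          from rfl, ← mul_assoc, ← ENNReal.ofReal_mul (gaussianPDFReal_nonneg _ _ _), hconv x t,
          ENNReal.ofReal_mul (gaussianPDFReal_nonneg _ _ _)]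
        ring
    _ = ∫⁻ t, ENNReal.ofReal (gaussianPDFReal m (v₁ + v₂).toNNReal t) *
          B.indicator (fun _ => (1:ℝ≥0∞)) t := by
        congr 1
        funext t
        rw [show (∫⁻ x, ENNReal.ofReal
            (gaussianPDFReal (m + v₁ / (v₁ + v₂) * (t - m)) ((v₁ * v₂ / (v₁ + v₂)).toNNReal) x))
          = ∫⁻ x, gaussianPDF (m + v₁ / (v₁ + v₂) * (t - m)) ((v₁ * v₂ / (v₁ + v₂)).toNNReal) x
          from rfl, lintegral_gaussianPDF_eq_one _ hw', mul_one]
    _ = gaussianReal m (v₁ + v₂).toNNReal B := by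
        rw [gaussianReal_apply m hS' B, ← lintegral_indicator hB]
        congr 1
        funext t
        by_cases ht : t ∈ B
        · rw [Set.indicator_of_mem ht]
          simp [Set.indicator_of_mem ht, gaussianPDF]
        · rw [Set.indicator_of_notMem ht]
          simp [Set.indicator_of_notMem ht]



end KalmanAux

open MeasureTheory ProbabilityTheory

/-- Conditional-mean update of the Kalman filter with predictable jumps: with `X ~ N(m,p)`,
`ξ ~ N(0,q)`, `η ~ N(0,r)` independent, `X̂ = X + ξ`, `Y = a X̂ + η`, `p̂ = p + q`,
`S = a² p̂ + r`, `K = p̂ a / S`, one has `E[X̂ | σ(Y)] = m + K (Y − a m)` a.s. -/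
theorem stmt10 {Ω : Type*} [MeasurableSpace Ω] (μ : Measure Ω) [IsProbabilityMeasure μ]
    (X ξ η : Ω → ℝ) (hX : Measurable X) (hξ : Measurable ξ) (hη : Measurable η)
    (m p q r : ℝ) (hp : 0 ≤ p) (hq : 0 ≤ q) (hr : 0 < r) (a : ℝ)
    (hlawX : μ.map X = gaussianReal m p.toNNReal)
    (hlawξ : μ.map ξ = gaussianReal 0 q.toNNReal)
    (hlawη : μ.map η = gaussianReal 0 r.toNNReal)
    (hindep : iIndepFun ![X, ξ, η] μ) :
    μ[(fun ω => X ω + ξ ω) |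
        MeasurableSpace.comap (fun ω => a * (X ω + ξ ω) + η ω) (borel ℝ)]
      =ᵐ[μ] fun ω => m + ((p + q) * a / (a ^ 2 * (p + q) + r))
        * ((a * (X ω + ξ ω) + η ω) - a * m) := by
  classical
  rw [show (borel ℝ) = (inferInstance : MeasurableSpace ℝ) from BorelSpace.measurable_eq.symm]
  have hG : Measurable (fun ω => X ω + ξ ω) := hX.add hξ
  have hYm : Measurable (fun ω => a * (X ω + ξ ω) + η ω) := (hG.const_mul a).add hη
  have hm : MeasurableSpace.comap (fun ω => a * (X ω + ξ ω) + η ω)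
      (inferInstance : MeasurableSpace ℝ) ≤ _ := hYm.comap_le
  -- independence facts
  have h01 : IndepFun X ξ μ := by
    have h := hindep.indepFun (show (0 : Fin 3) ≠ 1 by decide)
    simpa using h
  have hmeas3 : ∀ i, Measurable (![X, ξ, η] i) := by
    intro i
    fin_cases i <;> assumption
  have hindGη : IndepFun (fun ω => X ω + ξ ω) η μ := by
    have h := hindep.indepFun_add_left hmeas3 0 1 2 (by decide) (by decide)
    simp at h; exact h
  -- law of X + ξ
  have hlawG : μ.map (fun ω => X ω + ξ ω) = gaussianReal m (p + q).toNNReal :=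
    KalmanAux.map_add_gaussianReal μ hX hξ hp hq m hlawX hlawξ h01
  by_cases hpq : p + q = 0
  · -- degenerate case
    have hRHS : (fun ω => m + ((p + q) * a / (a ^ 2 * (p + q) + r))
        * ((a * (X ω + ξ ω) + η ω) - a * m)) = fun _ => m := by
      funext ω
      rw [hpq]
      simp
    rw [hRHS]
    rw [hpq, Real.toNNReal_zero, gaussianReal_zero_var] at hlawG
    have hGc : (fun ω => X ω + ξ ω) =ᵐ[μ] fun _ => m :=
      KalmanAux.ae_eq_const_of_map_eq_dirac hG hlawG
    calc μ[(fun ω => X ω + ξ ω) | _] =ᵐ[μ] μ[(fun _ => m) | _] := condExp_congr_ae hGc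
      _ = fun _ => m := condExp_const hm m
  have hpq' : 0 < p + q := lt_of_le_of_ne (by linarith) (Ne.symm hpq)
  -- integrability
  have hGint : Integrable (fun ω => X ω + ξ ω) μ := by
    have h := KalmanAux.integrable_id_gaussianReal m (p + q).toNNReal
    rw [← hlawG] at h
    exact (integrable_map_measure measurable_id.aestronglyMeasurable hG.aemeasurable).mp h
  have hηint : Integrable η μ := by
    have h := KalmanAux.integrable_id_gaussianReal 0 r.toNNReal
    rw [← hlawη] at h
    exact (integrable_map_measure measurable_id.aestronglyMeasurable hη.aemeasurable).mp h
  have hYint : Integrable (fun ω => a * (X ω + ξ ω) + η ω) μ := (hGint.const_mul a).add hηint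
  have hgint : Integrable (fun ω => m + ((p + q) * a / (a ^ 2 * (p + q) + r))
      * ((a * (X ω + ξ ω) + η ω) - a * m)) μ :=
    (integrable_const m).add ((hYint.sub (integrable_const (a * m))).const_mul _)
  -- joint law
  have hjoint : μ.map (fun ω => (X ω + ξ ω, η ω))
      = (gaussianReal m (p + q).toNNReal).prod (gaussianReal 0 r.toNNReal) := by
    rw [← hlawG, ← hlawη]
    exact (indepFun_iff_map_prod_eq_prod_map_map hG.aemeasurable hη.aemeasurable).mp hindGη
  have hΦm : Measurable (fun ω => (X ω + ξ ω, η ω)) := hG.prodMk hη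
  refine (ae_eq_condExp_of_forall_setIntegral_eq hm hGint
    (fun s _ _ => hgint.integrableOn) ?_ ?_).symm
  · -- set integral equality
    rintro s ⟨B, hB, rfl⟩ -
    have hs' : MeasurableSet {z : ℝ × ℝ | a * z.1 + z.2 ∈ B} :=
      ((measurable_fst.const_mul a).add measurable_snd) hB
    have hpre : (fun ω => a * (X ω + ξ ω) + η ω) ⁻¹' B
        = (fun ω => (X ω + ξ ω, η ω)) ⁻¹' {z : ℝ × ℝ | a * z.1 + z.2 ∈ B} := rfl
    have hfstν : Integrable (fun z : ℝ × ℝ => z.1)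
        ((gaussianReal m (p + q).toNNReal).prod (gaussianReal 0 r.toNNReal)) :=
      KalmanAux.integrable_fst_of_prob (KalmanAux.integrable_id_gaussianReal _ _)
    have hsndν : Integrable (fun z : ℝ × ℝ => z.2)
        ((gaussianReal m (p + q).toNNReal).prod (gaussianReal 0 r.toNNReal)) :=
      KalmanAux.integrable_snd_of_prob (KalmanAux.integrable_id_gaussianReal _ _)
    have hggν : Integrable (fun z : ℝ × ℝ => m + ((p + q) * a / (a ^ 2 * (p + q) + r))
        * ((a * z.1 + z.2) - a * m))
        ((gaussianReal m (p + q).toNNReal).prod (gaussianReal 0 r.toNNReal)) := by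
      have heq : (fun z : ℝ × ℝ => m + ((p + q) * a / (a ^ 2 * (p + q) + r))
          * ((a * z.1 + z.2) - a * m))
          = fun z : ℝ × ℝ => (((p + q) * a / (a ^ 2 * (p + q) + r)) * a) * z.1 +
            (((p + q) * a / (a ^ 2 * (p + q) + r)) * z.2 +
              (m - ((p + q) * a / (a ^ 2 * (p + q) + r)) * (a * m))) := by
        funext z
        ring
      rw [heq]
      exact (hfstν.const_mul _).add ((hsndν.const_mul _).add (integrable_const _))
    have hmain := KalmanAux.main_integral hpq' hr a m hB
    have hsub := integral_sub (hfstν.integrableOn (s := {z : ℝ × ℝ | a * z.1 + z.2 ∈ B}))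
      (hggν.integrableOn (s := {z : ℝ × ℝ | a * z.1 + z.2 ∈ B}))
    have hEq : (∫ z in {z : ℝ × ℝ | a * z.1 + z.2 ∈ B}, (z.1 - (m +
          ((p + q) * a / (a ^ 2 * (p + q) + r)) * ((a * z.1 + z.2) - a * m)))
          ∂((gaussianReal m (p + q).toNNReal).prod (gaussianReal 0 r.toNNReal))) = 0 := hmain
    rw [hsub] at hEq
    have hEq2 : (∫ z in {z : ℝ × ℝ | a * z.1 + z.2 ∈ B}, (m +
          ((p + q) * a / (a ^ 2 * (p + q) + r)) * ((a * z.1 + z.2) - a * m))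
          ∂((gaussianReal m (p + q).toNNReal).prod (gaussianReal 0 r.toNNReal)))
        = ∫ z in {z : ℝ × ℝ | a * z.1 + z.2 ∈ B}, z.1
          ∂((gaussianReal m (p + q).toNNReal).prod (gaussianReal 0 r.toNNReal)) := by
      linarith [hEq]
    -- transfer both sides back to Ω
    have h1 : ∫ z in {z : ℝ × ℝ | a * z.1 + z.2 ∈ B}, z.1
          ∂((gaussianReal m (p + q).toNNReal).prod (gaussianReal 0 r.toNNReal))
        = ∫ ω in (fun ω => a * (X ω + ξ ω) + η ω) ⁻¹' B, (X ω + ξ ω) ∂μ := by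
      rw [← hjoint, setIntegral_map hs' measurable_fst.aestronglyMeasurable hΦm.aemeasurable,
        ← hpre]
    have h2 : ∫ z in {z : ℝ × ℝ | a * z.1 + z.2 ∈ B}, (m +
          ((p + q) * a / (a ^ 2 * (p + q) + r)) * ((a * z.1 + z.2) - a * m))
          ∂((gaussianReal m (p + q).toNNReal).prod (gaussianReal 0 r.toNNReal))
        = ∫ ω in (fun ω => a * (X ω + ξ ω) + η ω) ⁻¹' B, (m +
            ((p + q) * a / (a ^ 2 * (p + q) + r)) * ((a * (X ω + ξ ω) + η ω) - a * m)) ∂μ := by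
      rw [← hjoint, setIntegral_map hs' ?_ hΦm.aemeasurable, ← hpre]
      exact (measurable_const.add ((((measurable_fst.const_mul a).add
        measurable_snd).sub measurable_const).const_mul _)).aestronglyMeasurable
    rw [← h1, ← h2, hEq2]
  · -- measurability with respect to the comap σ-algebra
    have hY0 : Measurable[MeasurableSpace.comap (fun ω => a * (X ω + ξ ω) + η ω)
        (inferInstance : MeasurableSpace ℝ)] (fun ω => a * (X ω + ξ ω) + η ω) :=
      Measurable.of_comap_le le_rfl
    have hφ : Measurable (fun t : ℝ => m + ((p + q) * a / (a ^ 2 * (p + q) + r)) * (t - a * m)) :=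
      measurable_const.add ((measurable_id.sub measurable_const).const_mul _)
    exact StronglyMeasurable.aestronglyMeasurable
      ((hφ.comp hY0).stronglyMeasurable)
end

section
/- Let X, ξ, η be independent real random variables with laws gaussianReal m P, gaussianReal 0 Q and gaussianReal 0 R respectively, where m ∈ ℝ, P, Q ≥ 0, R > 0, and let a ∈ ℝ. Set X̂ := X + ξ, Y := a·X̂ + η, P̂ := P + Q, S := a²·P̂ + R and K := P̂·a / S. Then E[(X̂ − (m + K·(Y − a·m)))²] = P̂ − K·a·P̂, and this quantity equals P̂·R/S. -/
open MeasureTheory ProbabilityTheory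

set_option maxHeartbeats 1000000

open Filter Asymptotics Topology

open MeasureTheory ProbabilityTheory Filter Asymptotics Topology
set_option maxHeartbeats 1000000


lemma tendsto_mul_exp_neg_mul_sq_atTop {b : ℝ} (hb : 0 < b) :
    Tendsto (fun x : ℝ => x * Real.exp (-b * x ^ 2)) atTop (𝓝 0) := by
  have h := rpow_mul_exp_neg_mul_sq_isLittleO_exp_neg hb 1
  simp only [Real.rpow_one] at h
  refine h.isBigO.trans_tendsto ?_
  rw [Real.tendsto_exp_comp_nhds_zero]
  exact (tendsto_const_mul_atBot_of_neg (by norm_num)).mpr tendsto_id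

lemma tendsto_mul_exp_neg_mul_sq_atBot {b : ℝ} (hb : 0 < b) :
    Tendsto (fun x : ℝ => x * Real.exp (-b * x ^ 2)) atBot (𝓝 0) := by
  have h := (tendsto_mul_exp_neg_mul_sq_atTop hb).comp tendsto_neg_atBot_atTop
  have h2 : (fun x : ℝ => (-x) * Real.exp (-b * (-x) ^ 2))
      = fun x : ℝ => -(x * Real.exp (-b * x ^ 2)) := by funext x; ring_nf
  rw [show ((fun x : ℝ => x * Real.exp (-b * x ^ 2)) ∘ Neg.neg)
      = fun x : ℝ => -(x * Real.exp (-b * x ^ 2)) from h2] at h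
  simpa using h.neg

lemma integrable_sq_mul_exp_neg_mul_sq {b : ℝ} (hb : 0 < b) :
    Integrable (fun x : ℝ => x ^ 2 * Real.exp (-b * x ^ 2)) := by
  have h := integrable_rpow_mul_exp_neg_mul_sq hb (s := 2) (by norm_num)
  have : ∀ x : ℝ, x ^ (2 : ℝ) = x ^ 2 := fun x => by
    rw [show (2:ℝ) = ((2:ℕ):ℝ) by norm_num, Real.rpow_natCast]
  simpa [this] using h

lemma integral_sq_mul_exp_neg_mul_sq {b : ℝ} (hb : 0 < b) :
    ∫ x : ℝ, x ^ 2 * Real.exp (-b * x ^ 2) = Real.sqrt (Real.pi / b) / (2 * b) := by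
  have hderiv : ∀ x : ℝ, HasDerivAt (fun x : ℝ => x * Real.exp (-b * x ^ 2))
      (Real.exp (-b * x ^ 2) - 2 * b * (x ^ 2 * Real.exp (-b * x ^ 2))) x := by
    intro x
    have h1 : HasDerivAt (fun x : ℝ => -b * x ^ 2) (-b * (2 * x ^ 1)) x :=
      (hasDerivAt_pow 2 x).const_mul (-b)
    have h2 := h1.exp
    have h3 := (hasDerivAt_id' x).mul h2
    refine h3.congr_deriv ?_
    ring
  have hint : Integrable (fun x : ℝ =>
      Real.exp (-b * x ^ 2) - 2 * b * (x ^ 2 * Real.exp (-b * x ^ 2))) :=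
    (integrable_exp_neg_mul_sq hb).sub ((integrable_sq_mul_exp_neg_mul_sq hb).const_mul _)
  have h0 := integral_of_hasDerivAt_of_tendsto hderiv hint
    (tendsto_mul_exp_neg_mul_sq_atBot hb) (tendsto_mul_exp_neg_mul_sq_atTop hb)
  rw [integral_sub (integrable_exp_neg_mul_sq hb)
      ((integrable_sq_mul_exp_neg_mul_sq hb).const_mul _),
    integral_const_mul, integral_gaussian, sub_zero] at h0
  have hb' : (2 * b) ≠ 0 := by positivity
  field_simp at h0 ⊢
  linarith

set_option maxHeartbeats 1000000 in
lemma integral_mul_exp_neg_mul_sq' {b : ℝ} (hb : 0 < b) :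
    ∫ x : ℝ, x * Real.exp (-b * x ^ 2) = 0 := by
  have hderiv : ∀ x : ℝ, HasDerivAt (fun x : ℝ => Real.exp (-b * x ^ 2))
      ((-2 * b) * (x * Real.exp (-b * x ^ 2))) x := by
    intro x
    have h1 : HasDerivAt (fun x : ℝ => -b * x ^ 2) (-b * (2 * x ^ 1)) x :=
      (hasDerivAt_pow 2 x).const_mul (-b)
    convert h1.exp using 1
    ring
  have hint : Integrable (fun x : ℝ => (-2 * b) * (x * Real.exp (-b * x ^ 2))) :=
    (integrable_mul_exp_neg_mul_sq hb).const_mul _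
  have hsqT : Tendsto (fun x : ℝ => x ^ 2) atTop atTop := tendsto_pow_atTop (by norm_num)
  have hsqB : Tendsto (fun x : ℝ => x ^ 2) atBot atTop := by
    have := hsqT.comp tendsto_neg_atBot_atTop
    simpa [Function.comp_def, neg_pow] using this
  have hexp : Tendsto (fun x : ℝ => Real.exp (-b * x ^ 2)) atTop (𝓝 0) := by
    rw [Real.tendsto_exp_comp_nhds_zero]
    have := tendsto_neg_atTop_atBot.comp (hsqT.const_mul_atTop hb)
    simpa [Function.comp_def, neg_mul] using this
  have hexp2 : Tendsto (fun x : ℝ => Real.exp (-b * x ^ 2)) atBot (𝓝 0) := by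
    rw [Real.tendsto_exp_comp_nhds_zero]
    have := tendsto_neg_atTop_atBot.comp (hsqB.const_mul_atTop hb)
    simpa [Function.comp_def, neg_mul] using this
  have h0 := integral_of_hasDerivAt_of_tendsto hderiv hint hexp2 hexp
  rw [integral_const_mul, sub_self] at h0
  have : (-2 : ℝ) * b ≠ 0 := by positivity
  exact (mul_eq_zero.mp h0).resolve_left this

open scoped NNReal ENNReal

lemma gaussian_integral_eq (m : ℝ) {v : ℝ≥0} (hv : v ≠ 0) (g : ℝ → ℝ) :
    ∫ x, g x ∂(gaussianReal m v) = ∫ x, gaussianPDFReal m v x * g x := by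
  rw [gaussianReal_of_var_ne_zero _ hv]
  have hd : gaussianPDF m v = fun x => ((gaussianPDFReal m v x).toNNReal : ℝ≥0∞) := rfl
  rw [hd, integral_withDensity_eq_integral_smul
    ((measurable_gaussianPDFReal m v).real_toNNReal) g]
  congr 1; funext x
  rw [NNReal.smul_def, smul_eq_mul, Real.coe_toNNReal _ (gaussianPDFReal_nonneg m v x)]

lemma gaussian_integrable_iff (m : ℝ) {v : ℝ≥0} (hv : v ≠ 0) (g : ℝ → ℝ) :
    Integrable g (gaussianReal m v) ↔ Integrable (fun x => gaussianPDFReal m v x * g x) := by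
  rw [gaussianReal_of_var_ne_zero _ hv]
  have hd : gaussianPDF m v = fun x => ((gaussianPDFReal m v x).toNNReal : ℝ≥0∞) := rfl
  rw [hd, integrable_withDensity_iff_integrable_smul
    ((measurable_gaussianPDFReal m v).real_toNNReal)]
  constructor <;> intro h <;>
  · refine h.congr (Filter.Eventually.of_forall fun x => ?_)
    simp only [NNReal.smul_def, smul_eq_mul,
      Real.coe_toNNReal _ (gaussianPDFReal_nonneg m v x)]

lemma gaussian_moments (m : ℝ) (v : ℝ≥0) :
    Integrable (fun x => x) (gaussianReal m v)
    ∧ (∫ x, x ∂(gaussianReal m v)) = m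
    ∧ Integrable (fun x => (x - m)^2) (gaussianReal m v)
    ∧ (∫ x, (x - m)^2 ∂(gaussianReal m v)) = (v : ℝ) := by
  by_cases hv : v = 0
  · subst hv
    rw [gaussianReal_zero_var]
    have e1 : (fun x : ℝ => x) =ᵐ[Measure.dirac m] (fun _ => m) := by
      rw [Filter.EventuallyEq, ae_dirac_iff
        (measurableSet_eq_fun measurable_id measurable_const : MeasurableSet {x : ℝ | x = m})]
    have e2 : (fun x : ℝ => (x - m)^2) =ᵐ[Measure.dirac m] (fun _ => (0:ℝ)) :=
      e1.mono fun x hx => by simp only at hx; rw [hx]; simp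
    have h1 : Integrable (fun x : ℝ => x) (Measure.dirac m) :=
      (integrable_const m).congr e1.symm
    have h2 : Integrable (fun x : ℝ => (x - m)^2) (Measure.dirac m) :=
      (integrable_const (0:ℝ)).congr e2.symm
    refine ⟨h1, ?_, h2, ?_⟩
    · rw [integral_congr_ae e1]; simp
    · rw [integral_congr_ae e2]; simp
  · have hV : 0 < (v : ℝ) := by positivity
    set V : ℝ := (v : ℝ) with hVdef
    set b : ℝ := (2 * V)⁻¹ with hbdef
    have hb : 0 < b := by positivity
    set C : ℝ := (Real.sqrt (2 * Real.pi * V))⁻¹ with hCdef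
    have hpdf : ∀ x, gaussianPDFReal m v x = C * Real.exp (-b * (x - m)^2) := by
      intro x
      rw [gaussianPDFReal]
      congr 1
      congr 1
      rw [hbdef]
      ring
    have hsqrt : C * Real.sqrt (Real.pi / b) = 1 := by
      rw [hCdef, show Real.pi / b = 2 * Real.pi * V by rw [hbdef]; field_simp]
      have : (0:ℝ) < Real.sqrt (2 * Real.pi * V) := Real.sqrt_pos.mpr (by positivity)
      field_simp
    -- integrability of pdf * id
    have hF : Integrable (fun y : ℝ => C * (Real.exp (-b * y^2) * (y + m))) := by
      have h := (integrable_mul_exp_neg_mul_sq hb).add ((integrable_exp_neg_mul_sq hb).const_mul m)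
      have h2 : (fun y : ℝ => Real.exp (-b * y^2) * (y + m))
          = fun y => y * Real.exp (-b * y^2) + m * Real.exp (-b * y^2) := by funext y; ring
      rw [show (fun y : ℝ => C * (Real.exp (-b * y^2) * (y + m)))
          = fun y => C * (y * Real.exp (-b * y^2) + m * Real.exp (-b * y^2)) by
        funext y; ring]
      exact h.const_mul C
    have hFeq : ∀ x : ℝ, gaussianPDFReal m v x * x
        = (fun y : ℝ => C * (Real.exp (-b * y^2) * (y + m))) (x - m) := by
      intro x; rw [hpdf]; simp only []; rw [sub_add_cancel]; ring
    have hG : Integrable (fun y : ℝ => C * (Real.exp (-b * y^2) * y^2)) := by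
      have h := integrable_sq_mul_exp_neg_mul_sq hb
      rw [show (fun y : ℝ => C * (Real.exp (-b * y^2) * y^2))
          = fun y => C * (y^2 * Real.exp (-b * y^2)) by funext y; ring]
      exact h.const_mul C
    have hGeq : ∀ x : ℝ, gaussianPDFReal m v x * (x - m)^2
        = (fun y : ℝ => C * (Real.exp (-b * y^2) * y^2)) (x - m) := by
      intro x; rw [hpdf]; simp only []; ring
    have int_id : Integrable (fun x => x) (gaussianReal m v) := by
      rw [gaussian_integrable_iff m hv]
      exact (hF.comp_sub_right m).congr (Filter.Eventually.of_forall fun x => (hFeq x).symm)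
    have int_sq : Integrable (fun x => (x - m)^2) (gaussianReal m v) := by
      rw [gaussian_integrable_iff m hv]
      exact (hG.comp_sub_right m).congr (Filter.Eventually.of_forall fun x => (hGeq x).symm)
    refine ⟨int_id, ?_, int_sq, ?_⟩
    · rw [gaussian_integral_eq m hv]
      calc ∫ x, gaussianPDFReal m v x * x
          = ∫ x, (fun y : ℝ => C * (Real.exp (-b * y^2) * (y + m))) (x - m) :=
            by congr 1; funext x; exact hFeq x
        _ = ∫ y, C * (Real.exp (-b * y^2) * (y + m)) :=
            integral_sub_right_eq_self (fun y : ℝ => C * (Real.exp (-b * y^2) * (y + m))) m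
        _ = C * ∫ y, Real.exp (-b * y^2) * (y + m) := integral_const_mul C _
        _ = C * ((∫ y, y * Real.exp (-b * y^2)) + m * ∫ y, Real.exp (-b * y^2)) := by
            congr 1
            rw [← integral_const_mul, ← integral_add (integrable_mul_exp_neg_mul_sq hb)
              ((integrable_exp_neg_mul_sq hb).const_mul m)]
            congr 1; funext y; ring
        _ = m := by
            rw [integral_mul_exp_neg_mul_sq' hb, integral_gaussian, zero_add, ← mul_assoc,
              mul_comm C m, mul_assoc, hsqrt, mul_one]
    · rw [gaussian_integral_eq m hv]
      calc ∫ x, gaussianPDFReal m v x * (x - m)^2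
          = ∫ x, (fun y : ℝ => C * (Real.exp (-b * y^2) * y^2)) (x - m) :=
            by congr 1; funext x; exact hGeq x
        _ = ∫ y, C * (Real.exp (-b * y^2) * y^2) :=
            integral_sub_right_eq_self (fun y : ℝ => C * (Real.exp (-b * y^2) * y^2)) m
        _ = C * ∫ y, Real.exp (-b * y^2) * y^2 := integral_const_mul C _
        _ = C * ∫ y, y^2 * Real.exp (-b * y^2) := by
            congr 1; congr 1; funext y; ring
        _ = (v : ℝ) := by
            rw [integral_sq_mul_exp_neg_mul_sq hb, hbdef]
            rw [show Real.pi / (2 * V)⁻¹ = 2 * Real.pi * V by field_simp]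
            rw [show (2 : ℝ) * (2 * V)⁻¹ = V⁻¹ by field_simp]
            rw [div_eq_mul_inv, inv_inv, ← mul_assoc, hCdef]
            rw [inv_mul_cancel₀ (ne_of_gt (Real.sqrt_pos.mpr (by positivity)))]
            rw [one_mul]

lemma transfer_moments {Ω : Type*} [MeasurableSpace Ω] (μ : Measure Ω) [IsProbabilityMeasure μ]
    (X : Ω → ℝ) (hX : Measurable X) (m : ℝ) (v : ℝ≥0)
    (hlaw : μ.map X = gaussianReal m v) :
    Integrable X μ ∧ (∫ ω, X ω ∂μ) = m
    ∧ Integrable (fun ω => (X ω - m)^2) μ ∧ (∫ ω, (X ω - m)^2 ∂μ) = (v : ℝ) := by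
  obtain ⟨i1, e1, i2, e2⟩ := gaussian_moments m v
  rw [← hlaw] at i1 e1 i2 e2
  have hm2 : Measurable (fun x : ℝ => (x - m)^2) := (measurable_id.sub_const m).pow_const 2
  refine ⟨?_, ?_, ?_, ?_⟩
  · have := (integrable_map_measure aestronglyMeasurable_id hX.aemeasurable).mp i1
    simpa [Function.comp_def] using this
  · rw [integral_map (φ := X) (f := fun x : ℝ => x) hX.aemeasurable
      aestronglyMeasurable_id] at e1
    exact e1
  · have := (integrable_map_measure hm2.aestronglyMeasurable hX.aemeasurable).mp i2
    simpa [Function.comp_def] using this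
  · rw [integral_map (φ := X) (f := fun x : ℝ => (x - m)^2) hX.aemeasurable
      hm2.aestronglyMeasurable] at e2
    exact e2

/-- Posterior-variance update of the Kalman filter with predictable jumps: with `X ~ N(m,p)`,
`ξ ~ N(0,q)`, `η ~ N(0,r)` independent, `X̂ = X + ξ`, `Y = a X̂ + η`, `p̂ = p + q`,
`S = a² p̂ + r`, `K = p̂ a / S`, the mean squared error of the posterior mean satisfies
`E[(X̂ − (m + K(Y − a m)))²] = p̂ − K a p̂ = p̂ r / S`. -/
theorem stmt11 {Ω : Type*} [MeasurableSpace Ω] (μ : Measure Ω) [IsProbabilityMeasure μ]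
    (X ξ η : Ω → ℝ) (hX : Measurable X) (hξ : Measurable ξ) (hη : Measurable η)
    (m p q r : ℝ) (hp : 0 ≤ p) (hq : 0 ≤ q) (hr : 0 < r) (a : ℝ)
    (hlawX : μ.map X = gaussianReal m p.toNNReal)
    (hlawξ : μ.map ξ = gaussianReal 0 q.toNNReal)
    (hlawη : μ.map η = gaussianReal 0 r.toNNReal)
    (hindep : iIndepFun ![X, ξ, η] μ) :
    (∫ ω, ((X ω + ξ ω) - (m + ((p + q) * a / (a ^ 2 * (p + q) + r))
        * ((a * (X ω + ξ ω) + η ω) - a * m))) ^ 2 ∂μ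
      = (p + q) - ((p + q) * a / (a ^ 2 * (p + q) + r)) * a * (p + q))
    ∧ ((p + q) - ((p + q) * a / (a ^ 2 * (p + q) + r)) * a * (p + q)
      = (p + q) * r / (a ^ 2 * (p + q) + r)) := by
  
  have hpq : 0 ≤ p + q := add_nonneg hp hq
  set S : ℝ := a ^ 2 * (p + q) + r with hSdef
  have hS : 0 < S := by
    have h1 : 0 ≤ a ^ 2 * (p + q) := mul_nonneg (sq_nonneg a) hpq
    rw [hSdef]; linarith
  set K : ℝ := (p + q) * a / S with hKdef
  obtain ⟨iX, EX, iX2, EX2⟩ := transfer_moments μ X hX m p.toNNReal hlawX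
  obtain ⟨iξ, Eξ, iξ2, Eξ2⟩ := transfer_moments μ ξ hξ 0 q.toNNReal hlawξ
  obtain ⟨iη, Eη, iη2, Eη2⟩ := transfer_moments μ η hη 0 r.toNNReal hlawη
  rw [Real.coe_toNNReal p hp] at EX2
  rw [Real.coe_toNNReal q hq] at Eξ2
  rw [Real.coe_toNNReal r hr.le] at Eη2
  simp only [sub_zero] at iξ2 Eξ2 iη2 Eη2
  have hXξ : IndepFun X ξ μ := by
    have := hindep.indepFun (i := 0) (j := 1) (by decide)
    simpa using this
  have hXη : IndepFun X η μ := by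
    have := hindep.indepFun (i := 0) (j := 2) (by decide)
    simpa using this
  have hξη : IndepFun ξ η μ := by
    have := hindep.indepFun (i := 1) (j := 2) (by decide)
    simpa using this
  have hUξ : IndepFun (fun ω => X ω - m) ξ μ :=
    hXξ.comp (measurable_id.sub_const m) measurable_id
  have hUη : IndepFun (fun ω => X ω - m) η μ :=
    hXη.comp (measurable_id.sub_const m) measurable_id
  have iU : Integrable (fun ω => X ω - m) μ := iX.sub (integrable_const m)
  have EU : ∫ ω, (X ω - m) ∂μ = 0 := by
    rw [integral_sub iX (integrable_const m), EX, integral_const]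
    simp
  have iUξ : Integrable (fun ω => (X ω - m) * ξ ω) μ := hUξ.integrable_mul iU iξ
  have iUη : Integrable (fun ω => (X ω - m) * η ω) μ := hUη.integrable_mul iU iη
  have iξη : Integrable (fun ω => ξ ω * η ω) μ := hξη.integrable_mul iξ iη
  have EUξ : ∫ ω, (X ω - m) * ξ ω ∂μ = 0 := by
    have h := hUξ.integral_mul_eq_mul_integral iU.aestronglyMeasurable iξ.aestronglyMeasurable
    simpa [Pi.mul_apply, EU, Eξ] using h
  have EUη : ∫ ω, (X ω - m) * η ω ∂μ = 0 := by
    have h := hUη.integral_mul_eq_mul_integral iU.aestronglyMeasurable iη.aestronglyMeasurable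
    simpa [Pi.mul_apply, EU, Eη] using h
  have Eξη : ∫ ω, ξ ω * η ω ∂μ = 0 := by
    have h := hξη.integral_mul_eq_mul_integral iξ.aestronglyMeasurable iη.aestronglyMeasurable
    simpa [Pi.mul_apply, Eξ, Eη] using h
  have key : (fun ω => ((X ω + ξ ω) - (m + K * ((a * (X ω + ξ ω) + η ω) - a * m))) ^ 2)
      = fun ω => (1 - K*a)^2 * (X ω - m)^2 + (1 - K*a)^2 * (ξ ω)^2 + K^2 * (η ω)^2
        + (2*(1 - K*a)^2) * ((X ω - m) * ξ ω) + (-(2*(1 - K*a)*K)) * ((X ω - m) * η ω)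
        + (-(2*(1 - K*a)*K)) * (ξ ω * η ω) := by
    funext ω; ring
  constructor
  · rw [key]
    have i1 : Integrable (fun ω => (1 - K*a)^2 * (X ω - m)^2) μ :=
      iX2.const_mul ((1 - K*a)^2)
    have i2 : Integrable (fun ω => (1 - K*a)^2 * (ξ ω)^2) μ :=
      iξ2.const_mul ((1 - K*a)^2)
    have i3 : Integrable (fun ω => K^2 * (η ω)^2) μ := iη2.const_mul (K^2)
    have i4 : Integrable (fun ω => (2*(1 - K*a)^2) * ((X ω - m) * ξ ω)) μ :=
      iUξ.const_mul (2*(1 - K*a)^2)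
    have i5 : Integrable (fun ω => (-(2*(1 - K*a)*K)) * ((X ω - m) * η ω)) μ :=
      iUη.const_mul (-(2*(1 - K*a)*K))
    have i6 : Integrable (fun ω => (-(2*(1 - K*a)*K)) * (ξ ω * η ω)) μ :=
      iξη.const_mul (-(2*(1 - K*a)*K))
    have A2 : Integrable (fun ω => (1 - K*a)^2 * (X ω - m)^2 + (1 - K*a)^2 * (ξ ω)^2) μ :=
      i1.add i2
    have A3 : Integrable (fun ω => (1 - K*a)^2 * (X ω - m)^2 + (1 - K*a)^2 * (ξ ω)^2
        + K^2 * (η ω)^2) μ := A2.add i3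
    have A4 : Integrable (fun ω => (1 - K*a)^2 * (X ω - m)^2 + (1 - K*a)^2 * (ξ ω)^2
        + K^2 * (η ω)^2 + (2*(1 - K*a)^2) * ((X ω - m) * ξ ω)) μ := A3.add i4
    have A5 : Integrable (fun ω => (1 - K*a)^2 * (X ω - m)^2 + (1 - K*a)^2 * (ξ ω)^2
        + K^2 * (η ω)^2 + (2*(1 - K*a)^2) * ((X ω - m) * ξ ω)
        + (-(2*(1 - K*a)*K)) * ((X ω - m) * η ω)) μ := A4.add i5
    rw [integral_add A5 i6, integral_add A4 i5, integral_add A3 i4, integral_add A2 i3,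
        integral_add i1 i2,
        integral_const_mul, integral_const_mul, integral_const_mul, integral_const_mul,
        integral_const_mul, integral_const_mul,
        EX2, Eξ2, Eη2, EUξ, EUη, Eξη]
    rw [hKdef, hSdef]
    field_simp
    ring
  · rw [hKdef, hSdef]
    field_simp
    ring
end

section
/- Let (Ω, 𝓕, P) be a probability space, G ⊆ 𝓕 a sub-σ-algebra, and X₀ a square-integrable real random variable. Let m̂ be a version of E[X₀ | G] and let P̂ be a nonnegative G-measurable random variable with E[X₀² | G] − m̂² = P̂ almost surely. Let λ, σ > 0 and Δ ≥ 0, and let W be a real random variable with E[W] = 0 and E[W²] = (σ²/(2λ))·(1 − e^{−2λΔ}), such that σ(W) is independent of G ⊔ σ(X₀). Define X := e^{−λΔ}·X₀ + W. Then almost surely E[X | G] = e^{−λΔ}·m̂ and E[X² | G] − (e^{−λΔ}·m̂)² = (σ²/(2λ))·(1 − e^{−2λΔ}) + e^{−2λΔ}·P̂. -/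
open MeasureTheory ProbabilityTheory

/-- Smoothing (prediction) step between observation times for the Ornstein–Uhlenbeck signal:
if `mhat = E[X₀ | G]`, `Phat = E[X₀² | G] − mhat²`, and `X = e^{−λΔ} X₀ + W` with `W` centered,
of variance `(σ²/(2λ))(1 − e^{−2λΔ})` and independent of `G ⊔ σ(X₀)`, then a.s.
`E[X | G] = e^{−λΔ} mhat` and `E[X² | G] − (e^{−λΔ} mhat)² = (σ²/(2λ))(1 − e^{−2λΔ}) + e^{−2λΔ} Phat`. -/
theorem stmt12 {Ω : Type*} (G : MeasurableSpace Ω) [mΩ : MeasurableSpace Ω]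
    (P : Measure Ω) [IsProbabilityMeasure P] (hG : G ≤ mΩ)
    (X₀ : Ω → ℝ) (hX₀meas : Measurable X₀)
    (hX₀sq : Integrable (fun ω => X₀ ω ^ 2) P)
    (mhat : Ω → ℝ) (hmhat : mhat =ᵐ[P] P[X₀ | G])
    (Phat : Ω → ℝ) (hPhatmeas : Measurable[G] Phat) (hPhatnonneg : ∀ ω, 0 ≤ Phat ω)
    (hPhat : (fun ω => (P[(fun ω' => X₀ ω' ^ 2) | G]) ω - mhat ω ^ 2) =ᵐ[P] Phat)
    (lam σ : ℝ) (hlam : 0 < lam) (hσ : 0 < σ) (Δ : ℝ) (hΔ : 0 ≤ Δ)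
    (W : Ω → ℝ) (hWmeas : Measurable W)
    (hWint : Integrable W P) (hWsq : Integrable (fun ω => W ω ^ 2) P)
    (hWmean : ∫ ω, W ω ∂P = 0)
    (hWvar : ∫ ω, W ω ^ 2 ∂P = σ ^ 2 / (2 * lam) * (1 - Real.exp (-2 * lam * Δ)))
    (hindep : ProbabilityTheory.Indep (MeasurableSpace.comap W (borel ℝ))
      (G ⊔ MeasurableSpace.comap X₀ (borel ℝ)) P) :
    (P[(fun ω => Real.exp (-lam * Δ) * X₀ ω + W ω) | G]
        =ᵐ[P] fun ω => Real.exp (-lam * Δ) * mhat ω)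
    ∧ ((fun ω => (P[(fun ω' => (Real.exp (-lam * Δ) * X₀ ω' + W ω') ^ 2) | G]) ω
          - (Real.exp (-lam * Δ) * mhat ω) ^ 2)
        =ᵐ[P] fun ω => σ ^ 2 / (2 * lam) * (1 - Real.exp (-2 * lam * Δ))
          + Real.exp (-2 * lam * Δ) * Phat ω) := by
  set a : ℝ := Real.exp (-lam * Δ) with ha_def
  set v : ℝ := σ ^ 2 / (2 * lam) * (1 - Real.exp (-2 * lam * Δ)) with hv_def
  have hborel : (borel ℝ) = (inferInstance : MeasurableSpace ℝ) := rfl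
  set H : MeasurableSpace Ω := G ⊔ MeasurableSpace.comap X₀ (borel ℝ) with hH_def
  have hGH : G ≤ H := le_sup_left
  have hcompX₀ : MeasurableSpace.comap X₀ (borel ℝ) ≤ mΩ := by
    rw [hborel]; exact hX₀meas.comap_le
  have hle : H ≤ mΩ := sup_le hG hcompX₀
  have hWcomap : MeasurableSpace.comap W (borel ℝ) ≤ mΩ := by
    rw [hborel]; exact hWmeas.comap_le
  -- integrability
  have hX₀mem : MemLp X₀ 2 P :=
    (memLp_two_iff_integrable_sq hX₀meas.aestronglyMeasurable).mpr hX₀sq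
  have hX₀int : Integrable X₀ P := hX₀mem.integrable one_le_two
  -- independence facts
  have hWX₀ : IndepFun W X₀ P := by
    have h : Indep (MeasurableSpace.comap W (borel ℝ)) (MeasurableSpace.comap X₀ (borel ℝ)) P :=
      indep_of_indep_of_le_right hindep le_sup_right
    exact (IndepFun_iff_Indep W X₀ P).mpr h
  have hX₀Wint : Integrable (fun ω => X₀ ω * W ω) P := by
    have := (hWX₀.symm).integrable_mul hX₀int hWint
    simpa [Pi.mul_def] using this
  have hWmeas' : Measurable[MeasurableSpace.comap W (borel ℝ)] W := by
    rw [hborel]; exact comap_measurable W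
  -- E[W | G] = 0
  have hWG : P[W | G] =ᵐ[P] fun _ => (0 : ℝ) := by
    have := condExp_indep_eq (μ := P) hWcomap hG hWmeas'.stronglyMeasurable
      (indep_of_indep_of_le_right hindep le_sup_left)
    simpa [hWmean] using this
  -- E[W² | G] = v
  have hW2G : P[(fun ω => W ω ^ 2) | G] =ᵐ[P] fun _ => v := by
    have hm : Measurable[MeasurableSpace.comap W (borel ℝ)] fun ω => W ω ^ 2 :=
      hWmeas'.pow_const 2
    have := condExp_indep_eq (μ := P) hWcomap hG hm.stronglyMeasurable
      (indep_of_indep_of_le_right hindep le_sup_left)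
    simpa [hWvar] using this
  -- E[W | H] = 0
  have hWH : P[W | H] =ᵐ[P] fun _ => (0 : ℝ) := by
    have := condExp_indep_eq (μ := P) hWcomap hle hWmeas'.stronglyMeasurable hindep
    simpa [hWmean] using this
  -- E[X₀ W | H] = 0
  have hX₀H : StronglyMeasurable[H] X₀ := by
    refine Measurable.stronglyMeasurable ?_
    have : Measurable[MeasurableSpace.comap X₀ (borel ℝ)] X₀ := by
      rw [hborel]; exact comap_measurable X₀
    exact this.mono le_sup_right le_rfl
  have hcrossH : P[(fun ω => X₀ ω * W ω) | H] =ᵐ[P] fun _ => (0 : ℝ) := by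
    have h1 : P[X₀ * W | H] =ᵐ[P] X₀ * P[W | H] :=
      condExp_mul_of_stronglyMeasurable_left hX₀H (by simpa [Pi.mul_def] using hX₀Wint) hWint
    have h2 : X₀ * P[W | H] =ᵐ[P] fun _ => (0 : ℝ) := by
      filter_upwards [hWH] with ω hω
      simp [Pi.mul_apply, hω]
    exact (h1.trans h2)
  -- E[X₀ W | G] = 0  (tower property)
  have hcrossG : P[(fun ω => X₀ ω * W ω) | G] =ᵐ[P] fun _ => (0 : ℝ) := by
    have htower : P[(fun ω => X₀ ω * W ω) | G]
        =ᵐ[P] P[P[(fun ω => X₀ ω * W ω) | H] | G] :=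
      (condExp_condExp_of_le hGH hle).symm
    refine htower.trans ?_
    have := condExp_congr_ae (m := G) (μ := P) hcrossH
    refine this.trans ?_
    rw [condExp_const hG]
  -- first part
  have part1 : P[(fun ω => a * X₀ ω + W ω) | G] =ᵐ[P] fun ω => a * mhat ω := by
    have hadd : P[(fun ω => a * X₀ ω + W ω) | G]
        =ᵐ[P] P[(fun ω => a * X₀ ω) | G] + P[W | G] :=
      condExp_add (hX₀int.const_mul a) hWint G
    have hsmul : P[(fun ω => a * X₀ ω) | G] =ᵐ[P] fun ω => a * (P[X₀ | G]) ω := by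
      simpa [Pi.smul_def, Pi.smul_apply, smul_eq_mul] using condExp_smul (μ := P) (m := G) a X₀
    refine hadd.trans ?_
    filter_upwards [hsmul, hWG, hmhat] with ω h1 h2 h3
    simp [Pi.add_apply, h1, h2, h3]
  refine ⟨part1, ?_⟩
  -- second part
  have ha2 : a ^ 2 = Real.exp (-2 * lam * Δ) := by
    rw [ha_def, sq, ← Real.exp_add]; ring_nf
  have hexpand : (fun ω => (a * X₀ ω + W ω) ^ 2)
      = fun ω => a ^ 2 * X₀ ω ^ 2 + ((2 * a) * (X₀ ω * W ω) + W ω ^ 2) := by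
    funext ω; ring
  have hsq : P[(fun ω' => (a * X₀ ω' + W ω') ^ 2) | G]
      =ᵐ[P] fun ω => a ^ 2 * (P[(fun ω' => X₀ ω' ^ 2) | G]) ω + v := by
    rw [hexpand]
    have hadd1 : P[(fun ω => a ^ 2 * X₀ ω ^ 2 + ((2 * a) * (X₀ ω * W ω) + W ω ^ 2)) | G]
        =ᵐ[P] P[(fun ω => a ^ 2 * X₀ ω ^ 2) | G]
          + P[(fun ω => (2 * a) * (X₀ ω * W ω) + W ω ^ 2) | G] :=
      condExp_add (hX₀sq.const_mul _) ((hX₀Wint.const_mul _).add hWsq) G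
    have hadd2 : P[(fun ω => (2 * a) * (X₀ ω * W ω) + W ω ^ 2) | G]
        =ᵐ[P] P[(fun ω => (2 * a) * (X₀ ω * W ω)) | G] + P[(fun ω => W ω ^ 2) | G] :=
      condExp_add (hX₀Wint.const_mul _) hWsq G
    have hs1 : P[(fun ω => a ^ 2 * X₀ ω ^ 2) | G]
        =ᵐ[P] fun ω => a ^ 2 * (P[(fun ω' => X₀ ω' ^ 2) | G]) ω := by
      simpa [Pi.smul_def, Pi.smul_apply, smul_eq_mul] using
        condExp_smul (μ := P) (m := G) (a ^ 2) (fun ω => X₀ ω ^ 2)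
    have hs2 : P[(fun ω => (2 * a) * (X₀ ω * W ω)) | G]
        =ᵐ[P] fun ω => (2 * a) * (P[(fun ω' => X₀ ω' * W ω') | G]) ω := by
      simpa [Pi.smul_def, Pi.smul_apply, smul_eq_mul] using
        condExp_smul (μ := P) (m := G) (2 * a) (fun ω => X₀ ω * W ω)
    refine hadd1.trans ?_
    filter_upwards [hadd2, hs1, hs2, hcrossG, hW2G] with ω h2 h3 h4 h5 h6
    simp only [Pi.add_apply] at h2 ⊢
    rw [h2, h3, h4, h5, h6]
    ring
  filter_upwards [hsq, hPhat, hmhat] with ω h1 h2 h3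
  rw [h1]
  linear_combination a ^ 2 * h2 + Phat ω * ha2
end
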